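/- arXiv:1207.3019 — 5 statements merged into one kernel-verified Lean document; each statement's English description precedes it below -/
import Mathlib

section
/- Let x* ∈ X satisfy f(x*) = 0. Then for every y ∈ X and every n×n real matrix Y, one has x* ∈ K(y, X). -/
open MeasureTheory intervalIntegral Set

attribute [local instance] Matrix.normedAddCommGroup Matrix.normedSpace


open FiniteDimensional in
/-- Auxiliary: in a finite-dimensional real normed space, the convex hull of a
compact set is compact. -/
theorem aux_isCompact_convexHull {E : Type} [NormedAddCommGroup E] [NormedSpace ℝ E]
    [FiniteDimensional ℝ E] {K : Set E} (hK : IsCompact K) :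
    IsCompact (convexHull ℝ K) := by
  classical
  rcases K.eq_empty_or_nonempty with rfl | ⟨k0, hk0⟩
  · simp
  set m : ℕ := Module.finrank ℝ E + 1 with hm
  set T : Set ((Fin m → ℝ) × (Fin m → E)) :=
    (stdSimplex ℝ (Fin m)) ×ˢ (Set.pi Set.univ fun _ : Fin m => K) with hT
  have hTc : IsCompact T :=
    (isCompact_stdSimplex _ _).prod (isCompact_univ_pi fun _ => hK)
  set φ : ((Fin m → ℝ) × (Fin m → E)) → E := fun q => ∑ i, q.1 i • q.2 i with hφ
  have hφc : Continuous φ := by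
    apply continuous_finset_sum
    intro i _
    exact ((continuous_apply i).comp continuous_fst).smul
      ((continuous_apply i).comp continuous_snd)
  have himg : convexHull ℝ K = φ '' T := by
    apply Set.Subset.antisymm
    · intro x hx
      obtain ⟨ι, hι, z, w, hzK, hai, hwpos, hwsum, hwx⟩ :=
        eq_pos_convex_span_of_mem_convexHull hx
      have hcard : Fintype.card ι ≤ m := by
        calc Fintype.card ι ≤ Module.finrank ℝ (vectorSpan ℝ (Set.range z)) + 1 :=
              hai.card_le_finrank_succ
          _ ≤ m := by
              have := Submodule.finrank_le (vectorSpan ℝ (Set.range z))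
              omega
      obtain ⟨e⟩ : Nonempty (ι ↪ Fin m) := by
        apply Function.Embedding.nonempty_of_card_le
        simpa using hcard
      set w' : Fin m → ℝ := fun j => if h : ∃ i, e i = j then w h.choose else 0 with hw'
      set p' : Fin m → E := fun j => if h : ∃ i, e i = j then z h.choose else k0 with hp'
      have hwe : ∀ i : ι, w' (e i) = w i := by
        intro i
        have h : ∃ i', e i' = e i := ⟨i, rfl⟩
        have : h.choose = i := e.injective h.choose_spec
        simp [hw', dif_pos h, this]
      have hpe : ∀ i : ι, p' (e i) = z i := by
        intro i
        have h : ∃ i', e i' = e i := ⟨i, rfl⟩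
        have : h.choose = i := e.injective h.choose_spec
        simp [hp', dif_pos h, this]
      have hsum_eq : ∀ (g : ℝ → E → E), (∀ u, g 0 u = 0) →
          ∑ j, g (w' j) (p' j) = ∑ i, g (w i) (z i) := by
        intro g hg
        rw [← Finset.sum_subset (Finset.subset_univ (Finset.univ.map e))]
        · rw [Finset.sum_map]
          exact Finset.sum_congr rfl fun i _ => by rw [hwe, hpe]
        · intro j _ hj
          have : ¬ ∃ i, e i = j := by
            intro ⟨i, hi⟩
            exact hj (Finset.mem_map.2 ⟨i, Finset.mem_univ i, hi⟩)
          simp [hw', dif_neg this, hg]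
      refine ⟨(w', p'), ⟨?_, ?_⟩, ?_⟩
      · constructor
        · intro j
          simp only [hw']
          split
          · exact (hwpos _).le
          · exact le_refl 0
        · have := hsum_eq (fun r u => r • u) (fun u => zero_smul ℝ u)
          have hsumw : ∑ j, w' j = ∑ i, w i := by
            rw [← Finset.sum_subset (Finset.subset_univ (Finset.univ.map e))]
            · rw [Finset.sum_map]
              exact Finset.sum_congr rfl fun i _ => hwe i
            · intro j _ hj
              have : ¬ ∃ i, e i = j := by
                intro ⟨i, hi⟩
                exact hj (Finset.mem_map.2 ⟨i, Finset.mem_univ i, hi⟩)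
              simp [hw', dif_neg this]
          rw [hsumw, hwsum]
      · intro j _
        simp only [hp']
        split
        · exact hzK ⟨_, rfl⟩
        · exact hk0
      · have := hsum_eq (fun r u => r • u) (fun u => zero_smul ℝ u)
        simp only [hφ]
        rw [this, hwx]
    · rintro _ ⟨⟨w, p⟩, ⟨hw, hp⟩, rfl⟩
      exact (convex_convexHull ℝ K).sum_mem (fun i _ => hw.1 i) hw.2
        (fun i _ => subset_convexHull ℝ K (hp i (Set.mem_univ i)))
  rw [himg]
  exact hTc.image hφc

/-- Krawczyk operator, Property 1: any zero `x*` of `f` in the box `X` belongs to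
`K(y, X)` for every `y ∈ X` and every real `n × n` matrix `Y`. -/
theorem krawczyk_contains_root (n : ℕ) (hn : 1 ≤ n)
    (D : Set (Fin n → ℝ)) (hD : IsOpen D)
    (f : (Fin n → ℝ) → (Fin n → ℝ))
    (J : (Fin n → ℝ) → Matrix (Fin n) (Fin n) ℝ)
    (hf : ∀ z ∈ D, HasFDerivAt f (LinearMap.toContinuousLinearMap (Matrix.mulVecLin (J z))) z)
    (hJc : ContinuousOn J D)
    (a b : Fin n → ℝ) (hab : a ≤ b)
    (X : Set (Fin n → ℝ)) (hX : X = Set.Icc a b) (hXD : X ⊆ D)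
    (M : Set (Matrix (Fin n) (Fin n) ℝ)) (hM : Convex ℝ M)
    (hJM : ∀ z ∈ X, J z ∈ M)
    (xstar : Fin n → ℝ) (hxstar : xstar ∈ X) (hfstar : f xstar = 0)
    (y : Fin n → ℝ) (hy : y ∈ X)
    (Y : Matrix (Fin n) (Fin n) ℝ) :
    xstar ∈ { w | ∃ A ∈ M, ∃ x ∈ X,
      w = y - Y.mulVec (f y) + (1 - Y * A).mulVec (x - y) } := by
  -- the segment from xstar to y
  set v : Fin n → ℝ := y - xstar with hv
  set c : ℝ → (Fin n → ℝ) := fun t => xstar + t • v with hc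
  have hXconv : Convex ℝ X := hX ▸ convex_Icc a b
  have hcX : ∀ t ∈ Set.Icc (0:ℝ) 1, c t ∈ X := by
    intro t ht
    have h := hXconv hxstar hy (by linarith [ht.2] : (0:ℝ) ≤ 1 - t) ht.1 (by ring)
    have : c t = (1 - t) • xstar + t • y := by
      simp only [hc, hv]
      module
    rw [this]; exact h
  have hccont : Continuous c := by
    simp only [hc]; continuity
  -- derivative of f ∘ c
  have hg : ∀ t ∈ Set.Icc (0:ℝ) 1, HasDerivAt (f ∘ c) ((J (c t)).mulVec v) t := by
    intro t ht
    have hct : HasDerivAt c v t := by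
      have : HasDerivAt (fun s : ℝ => s • v) ((1:ℝ) • v) t := (hasDerivAt_id t).smul_const v
      simpa only [one_smul] using (this.const_add xstar)
    have hft := hf (c t) (hXD (hcX t ht))
    simpa using hft.comp_hasDerivAt t hct
  have hJcc : ContinuousOn (fun t => J (c t)) (Set.Icc (0:ℝ) 1) :=
    hJc.comp hccont.continuousOn (fun t ht => hXD (hcX t ht))
  letI : ENormedAddMonoid (Matrix (Fin n) (Fin n) ℝ) := NormedAddGroup.toENormedAddMonoid
  have hInt : IntervalIntegrable (fun t => J (c t)) volume 0 1 :=
    ContinuousOn.intervalIntegrable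
      (by rwa [Set.uIcc_of_le (by norm_num : (0:ℝ) ≤ 1)])
  have hIntv : IntervalIntegrable (fun t => (J (c t)).mulVec v) volume 0 1 := by
    apply ContinuousOn.intervalIntegrable
    rw [Set.uIcc_of_le (by norm_num : (0:ℝ) ≤ 1)]
    exact (continuous_id.matrix_mulVec continuous_const).comp_continuousOn hJcc
  -- fundamental theorem of calculus
  have hFTC : f y = ∫ t in (0:ℝ)..1, (J (c t)).mulVec v := by
    have := intervalIntegral.integral_eq_sub_of_hasDerivAt
      (f := f ∘ c) (f' := fun t => (J (c t)).mulVec v)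
      (by intro t ht; exact hg t (by rwa [Set.uIcc_of_le (by norm_num : (0:ℝ) ≤ 1)] at ht))
      hIntv
    have h0 : c 0 = xstar := by simp [hc]
    have h1 : c 1 = y := by simp [hc, hv]
    rw [this]
    simp [Function.comp, h0, h1, hfstar]
  -- the averaged Jacobian
  set A₀ : Matrix (Fin n) (Fin n) ℝ := ∫ t in (0:ℝ)..1, J (c t) with hA₀
  -- A₀ ∈ M
  have hA₀M : A₀ ∈ M := by
    set S : Set (Matrix (Fin n) (Fin n) ℝ) :=
      convexHull ℝ ((fun t => J (c t)) '' Set.Icc (0:ℝ) 1) with hS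
    have hScomp : IsCompact S :=
      aux_isCompact_convexHull (isCompact_Icc.image_of_continuousOn hJcc)
    have hSM : S ⊆ M :=
      convexHull_min (by rintro _ ⟨t, ht, rfl⟩; exact hJM _ (hcX t ht)) hM
    haveI : IsProbabilityMeasure (volume.restrict (Set.Ioc (0:ℝ) 1)) :=
      ⟨by simp⟩
    have hmem : A₀ ∈ S := by
      rw [hA₀, intervalIntegral.integral_of_le (by norm_num : (0:ℝ) ≤ 1)]
      apply (convex_convexHull ℝ _).integral_mem hScomp.isClosed
      · filter_upwards [ae_restrict_mem measurableSet_Ioc] with t ht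
        exact subset_convexHull ℝ _ ⟨t, Set.Ioc_subset_Icc_self ht, rfl⟩
      · rw [← IntegrableOn, ← integrableOn_Icc_iff_integrableOn_Ioc]
        exact hJcc.integrableOn_compact isCompact_Icc
    exact hSM hmem
  -- A₀ .mulVec v = f y
  have hAv : A₀.mulVec v = f y := by
    let L : Matrix (Fin n) (Fin n) ℝ →L[ℝ] (Fin n → ℝ) :=
      LinearMap.toContinuousLinearMap
        { toFun := fun A => A.mulVec v
          map_add' := fun A B => Matrix.add_mulVec A B v
          map_smul' := fun r A => by simp [Matrix.smul_mulVec] }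
    have := L.intervalIntegral_comp_comm hInt (a := 0) (b := 1)
    simp only [L, LinearMap.coe_toContinuousLinearMap', LinearMap.coe_mk, AddHom.coe_mk] at this
    rw [hA₀, hFTC]; exact this.symm
  refine ⟨A₀, hA₀M, xstar, hxstar, ?_⟩
  have h1 : (1 - Y * A₀).mulVec (xstar - y)
      = (xstar - y) - Y.mulVec (A₀.mulVec (xstar - y)) := by
    rw [Matrix.sub_mulVec, Matrix.one_mulVec, ← Matrix.mulVec_mulVec]
  have h2 : A₀.mulVec (xstar - y) = - f y := by
    have : xstar - y = -v := by simp [hv]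
    rw [this, Matrix.mulVec_neg, hAv]
  rw [h1, h2]
  simp only [Matrix.mulVec_neg, sub_neg_eq_add]
  abel
end

section
/- If there exist y ∈ X and an invertible n×n real matrix Y such that K(y, X) ⊆ X, then f has a zero in X, i.e., there exists x* ∈ X with f(x*) = 0. -/
set_option maxHeartbeats 1000000

lemma kraw_fixedpoint {n : ℕ} (ν : (Fin n → ℝ) → ℝ) (hνc : Continuous ν)
    (hν0 : ∀ v, ν v = 0 → v = 0) (hνnonneg : ∀ v, 0 ≤ ν v)
    (hνsmul : ∀ (r : ℝ), 0 ≤ r → ∀ v, ν (r • v) = r * ν v)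
    (X : Set (Fin n → ℝ)) (hXc : IsCompact X) (hXconv : Convex ℝ X)
    (g : (Fin n → ℝ) → (Fin n → ℝ)) (hgc : ContinuousOn g X)
    (hgX : ∀ x ∈ X, g x ∈ X)
    (y : Fin n → ℝ) (hy : y ∈ X)
    (hne : ∀ x₁ ∈ X, ∀ x₂ ∈ X, ν (g x₁ - g x₂) ≤ ν (x₁ - x₂))
    (hbound : ∀ x ∈ X, ν (y - g x) ≤ 1) :
    ∃ x ∈ X, g x = x := by
  have hXne : X.Nonempty := ⟨y, hy⟩
  have hHc : ContinuousOn (fun x => ν (x - g x)) X :=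
    hνc.comp_continuousOn (continuousOn_id.sub hgc)
  obtain ⟨xs, hxsX, hxsmin⟩ := hXc.exists_isMinOn hXne hHc
  refine ⟨xs, hxsX, ?_⟩
  have key : ∀ t : ℝ, 0 < t → t ≤ 1 → ν (xs - g xs) ≤ t := by
    intro t ht0 ht1
    set gt : (Fin n → ℝ) → (Fin n → ℝ) := fun x => t • y + (1 - t) • g x with hgt
    have hgtX : ∀ x ∈ X, gt x ∈ X := fun x hx =>
      hXconv hy (hgX x hx) (le_of_lt ht0) (by linarith) (by ring)
    have hgtc : ContinuousOn gt X := (continuousOn_const).add (hgc.const_smul (1 - t) :)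
    obtain ⟨z, hzX, hzmin⟩ := hXc.exists_isMinOn hXne
      (hνc.comp_continuousOn (continuousOn_id.sub hgtc))
    have hcontr : ν (gt z - gt (gt z)) ≤ (1 - t) * ν (z - gt z) := by
      have h1 : gt z - gt (gt z) = (1 - t) • (g z - g (gt z)) := by
        simp only [hgt]
        module
      rw [h1, hνsmul _ (by linarith)]
      exact mul_le_mul_of_nonneg_left (hne z hzX (gt z) (hgtX z hzX)) (by linarith)
    have hmin2 : ν (z - gt z) ≤ ν (gt z - gt (gt z)) := hzmin (hgtX z hzX)
    have hz0 : ν (z - gt z) = 0 := by nlinarith [hνnonneg (z - gt z)]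
    have hzfix : z - gt z = 0 := hν0 _ hz0
    have hzg : z - g z = t • (y - g z) := by
      have hz : z = t • y + (1 - t) • g z := by rwa [sub_eq_zero] at hzfix
      nth_rewrite 1 [hz]
      module
    have : ν (z - g z) ≤ t := by
      rw [hzg, hνsmul _ (le_of_lt ht0)]
      calc t * ν (y - g z) ≤ t * 1 := mul_le_mul_of_nonneg_left (hbound z hzX) (le_of_lt ht0)
        _ = t := mul_one t
    exact le_trans (hxsmin hzX) this
  have hs0 : ν (xs - g xs) = 0 := by
    by_contra h
    have hpos : 0 < ν (xs - g xs) := lt_of_le_of_ne (hνnonneg _) (Ne.symm h)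
    have := key (min 1 (ν (xs - g xs) / 2)) (by positivity) (min_le_left _ _)
    have h2 := min_le_right (1:ℝ) (ν (xs - g xs) / 2)
    linarith
  have := hν0 _ hs0
  rw [sub_eq_zero] at this
  exact this.symm


lemma kraw_mvt {n : ℕ} (D : Set (Fin n → ℝ)) (hD : IsOpen D)
    (f : (Fin n → ℝ) → (Fin n → ℝ)) (J : (Fin n → ℝ) → Matrix (Fin n) (Fin n) ℝ)
    (hf : ∀ z ∈ D, HasFDerivAt f (LinearMap.toContinuousLinearMap (Matrix.mulVecLin (J z))) z)
    (hJc : ContinuousOn J D)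
    (x₁ x₂ : Fin n → ℝ) (hseg : ∀ t : ℝ, t ∈ Set.Icc (0:ℝ) 1 → x₂ + t • (x₁ - x₂) ∈ D) :
    f x₁ - f x₂ =
      (Matrix.of fun i j => ∫ t in (0:ℝ)..1, J (x₂ + t • (x₁ - x₂)) i j).mulVec (x₁ - x₂) := by
  set v : Fin n → ℝ := x₁ - x₂ with hv
  set γ : ℝ → (Fin n → ℝ) := fun t => x₂ + t • v with hγ
  have hγc : Continuous γ := by continuity
  have hγd : ∀ t : ℝ, HasDerivAt γ v t := by
    intro t
    have h1 : HasDerivAt (fun s : ℝ => s • v) ((1:ℝ) • v) t := (hasDerivAt_id t).smul_const v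
    simpa [hγ] using h1.const_add x₂
  have hγ0 : γ 0 = x₂ := by simp [hγ]
  have hγ1 : γ 1 = x₁ := by simp [hγ, hv]
  have hmem : ∀ t ∈ Set.Icc (0:ℝ) 1, γ t ∈ D := fun t ht => hseg t ht
  have hφd : ∀ t ∈ Set.Icc (0:ℝ) 1,
      HasDerivAt (fun s => f (γ s)) ((J (γ t)).mulVec v) t := by
    intro t ht
    have := (hf (γ t) (hmem t ht)).comp_hasDerivAt t (hγd t)
    simpa [Function.comp_def] using this
  have hJγc : ∀ i j, ContinuousOn (fun t => J (γ t) i j) (Set.Icc (0:ℝ) 1) := by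
    intro i j
    have h1 : ContinuousOn (fun t => J (γ t)) (Set.Icc (0:ℝ) 1) :=
      hJc.comp hγc.continuousOn hmem
    exact ((continuous_apply j).comp (continuous_apply i)).comp_continuousOn h1
  funext i
  have hint : ∀ j, IntervalIntegrable (fun t => J (γ t) i j * v j) MeasureTheory.volume 0 1 := by
    intro j
    exact (((hJγc i j).mul continuousOn_const).mono (by rw [Set.uIcc_of_le] <;> norm_num)).intervalIntegrable
  have heq : ∫ t in (0:ℝ)..1, ((J (γ t)).mulVec v) i =
      ∑ j, (∫ t in (0:ℝ)..1, J (γ t) i j) * v j := by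
    have h1 : ∀ t, ((J (γ t)).mulVec v) i = ∑ j, J (γ t) i j * v j := by
      intro t; simp [Matrix.mulVec, dotProduct]
    simp only [h1]
    rw [intervalIntegral.integral_finset_sum (fun j _ => hint j)]
    congr 1
    funext j
    rw [intervalIntegral.integral_mul_const]
  have hftc : ∫ t in (0:ℝ)..1, ((J (γ t)).mulVec v) i = f x₁ i - f x₂ i := by
    have hd : ∀ t ∈ Set.uIcc (0:ℝ) 1,
        HasDerivAt (fun s => f (γ s) i) (((J (γ t)).mulVec v) i) t := by
      intro t ht
      rw [Set.uIcc_of_le (by norm_num : (0:ℝ) ≤ 1)] at ht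
      exact (hasDerivAt_pi.mp (hφd t ht)) i
    have hii : IntervalIntegrable (fun t => ((J (γ t)).mulVec v) i) MeasureTheory.volume 0 1 := by
      have h1 : (fun t => ((J (γ t)).mulVec v) i) = fun t => ∑ j, J (γ t) i j * v j := by
        funext t; simp [Matrix.mulVec, dotProduct]
      rw [h1]
      have h2 := IntervalIntegrable.sum (f := fun j t => J (γ t) i j * v j) Finset.univ
        (fun j _ => hint j)
      simpa [Finset.sum_fn] using h2
    have := intervalIntegral.integral_eq_sub_of_hasDerivAt hd hii
    rw [this, hγ0, hγ1]
  have : f x₁ i - f x₂ i = ∑ j, (∫ t in (0:ℝ)..1, J (γ t) i j) * v j := by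
    rw [← heq, hftc]
  simpa [Matrix.mulVec, dotProduct] using this


/-- Krawczyk operator, Property 3: if `K(y, X) ⊆ X` for some `y ∈ X` and some invertible real
`n × n` matrix `Y`, then `f` has a zero in the box `X`. -/
theorem krawczyk_subset_existence (n : ℕ) (hn : 1 ≤ n)
    (D : Set (Fin n → ℝ)) (hD : IsOpen D)
    (f : (Fin n → ℝ) → (Fin n → ℝ))
    (J : (Fin n → ℝ) → Matrix (Fin n) (Fin n) ℝ)
    (hf : ∀ z ∈ D, HasFDerivAt f (LinearMap.toContinuousLinearMap (Matrix.mulVecLin (J z))) z)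
    (hJc : ContinuousOn J D)
    (a b : Fin n → ℝ) (hab : a ≤ b)
    (X : Set (Fin n → ℝ)) (hX : X = Set.Icc a b) (hXD : X ⊆ D)
    (M : Set (Matrix (Fin n) (Fin n) ℝ)) (hM : Convex ℝ M)
    (hJM : ∀ z ∈ X, J z ∈ M)
    (y : Fin n → ℝ) (hy : y ∈ X)
    (Y : Matrix (Fin n) (Fin n) ℝ) (hY : IsUnit Y)
    (hsub : { w | ∃ A ∈ M, ∃ x ∈ X,
      w = y - Y.mulVec (f y) + (1 - Y * A).mulVec (x - y) } ⊆ X) :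
    ∃ xstar ∈ X, f xstar = 0 := by
  classical
  -- basic facts about the box
  have hlo : ∀ x ∈ X, ∀ i, a i ≤ x i := by
    intro x hx i; rw [hX] at hx; exact hx.1 i
  have hhi : ∀ x ∈ X, ∀ i, x i ≤ b i := by
    intro x hx i; rw [hX] at hx; exact hx.2 i
  have hmk : ∀ x : Fin n → ℝ, (∀ i, a i ≤ x i) → (∀ i, x i ≤ b i) → x ∈ X := by
    intro x h1 h2; rw [hX]; exact ⟨h1, h2⟩
  have hXcompact : IsCompact X := hX ▸ isCompact_Icc
  have hXconv : Convex ℝ X := hX ▸ convex_Icc a b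
  -- weights and the weighted sup seminorm
  set w : Fin n → ℝ := fun i => b i - a i with hwdef
  have hw0 : ∀ i, 0 ≤ w i := fun i => sub_nonneg.2 (hab i)
  set c : Fin n → ℝ := fun i => if w i = 0 then 1 else (w i)⁻¹ with hcdef
  have hcpos : ∀ i, 0 < c i := by
    intro i; by_cases h : w i = 0
    · simp only [hcdef, if_pos h]; exact one_pos
    · simp only [hcdef, if_neg h]
      exact inv_pos.2 (lt_of_le_of_ne (hw0 i) (Ne.symm h))
  have hcw : ∀ i, c i * w i ≤ 1 := by
    intro i; by_cases h : w i = 0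
    · rw [show c i * w i = c i * 0 by rw [h]]
      simp
    · simp only [hcdef, if_neg h]
      rw [inv_mul_cancel₀ h]
  have hwc : ∀ i, w i ≠ 0 → w i * c i = 1 := by
    intro i h; simp only [hcdef, if_neg h]; rw [mul_inv_cancel₀ h]
  set ν : (Fin n → ℝ) → ℝ := fun v => ‖fun i => c i * v i‖ with hνdef
  have hνnonneg : ∀ v, 0 ≤ ν v := fun v => norm_nonneg _
  have hνc : Continuous ν := by
    apply continuous_norm.comp
    exact continuous_pi fun i => continuous_const.mul (continuous_apply i)
  have hν0 : ∀ v, ν v = 0 → v = 0 := by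
    intro v hv
    have h1 : (fun i => c i * v i) = 0 := norm_eq_zero.1 hv
    funext i
    have h2 : c i * v i = 0 := congrFun h1 i
    rcases mul_eq_zero.1 h2 with h | h
    · exact absurd h (ne_of_gt (hcpos i))
    · exact h
  have hνsmul : ∀ (r : ℝ), 0 ≤ r → ∀ v, ν (r • v) = r * ν v := by
    intro r hr v
    have h1 : (fun i => c i * (r • v) i) = r • fun i => c i * v i := by
      funext i; simp [Pi.smul_apply, smul_eq_mul]; ring
    simp only [hνdef]
    rw [h1, norm_smul, Real.norm_eq_abs, abs_of_nonneg hr]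
  have hνle : ∀ (v : Fin n → ℝ) (K : ℝ), 0 ≤ K → (∀ i, |c i * v i| ≤ K) → ν v ≤ K := by
    intro v K hK h
    exact (pi_norm_le_iff_of_nonneg hK).2 fun i => by rw [Real.norm_eq_abs]; exact h i
  have hνge : ∀ (v : Fin n → ℝ) i, |c i * v i| ≤ ν v := by
    intro v i
    have := norm_le_pi_norm (fun i => c i * v i) i
    rwa [Real.norm_eq_abs] at this
  -- expansion of the Krawczyk-type matrix action, componentwise
  have hexp : ∀ (A : Matrix (Fin n) (Fin n) ℝ) (u : Fin n → ℝ) (i : Fin n),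
      ((1 - Y * A).mulVec u) i = u i - ∑ k, ∑ j, Y i k * (A k j * u j) := by
    intro A u i
    rw [Matrix.sub_mulVec, Matrix.one_mulVec, Pi.sub_apply]
    congr 1
    have h1 : ((Y * A).mulVec u) i = ∑ j, (∑ k, Y i k * A k j) * u j := by
      simp [Matrix.mulVec, dotProduct, Matrix.mul_apply]
    rw [h1]
    calc ∑ j, (∑ k, Y i k * A k j) * u j
        = ∑ j, ∑ k, Y i k * (A k j * u j) := by
          refine Finset.sum_congr rfl fun j _ => ?_
          rw [Finset.sum_mul]
          exact Finset.sum_congr rfl fun k _ => mul_assoc _ _ _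
      _ = ∑ k, ∑ j, Y i k * (A k j * u j) := Finset.sum_comm

  -- row-sum bound from the Krawczyk inclusion
  have hrow : ∀ B : Matrix (Fin n) (Fin n) ℝ,
      (∀ x ∈ X, y - Y.mulVec (f y) + B.mulVec (x - y) ∈ X) →
      ∀ i, ∑ j, |B i j| * w j ≤ w i := by
    intro B hB i
    set xp : Fin n → ℝ := fun j => if 0 ≤ B i j then b j else a j with hxpdef
    set xm : Fin n → ℝ := fun j => if 0 ≤ B i j then a j else b j with hxmdef
    have hxp : xp ∈ X := by
      refine hmk _ (fun j => ?_) (fun j => ?_) <;> simp only [hxpdef] <;> split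
      · exact hab j
      · exact le_refl _
      · exact le_refl _
      · exact hab j
    have hxm : xm ∈ X := by
      refine hmk _ (fun j => ?_) (fun j => ?_) <;> simp only [hxmdef] <;> split
      · exact le_refl _
      · exact hab j
      · exact hab j
      · exact le_refl _
    have h1 := hhi _ (hB xp hxp) i
    have h2 := hlo _ (hB xm hxm) i
    simp only [Pi.add_apply, Pi.sub_apply] at h1 h2
    have happ : ∀ u : Fin n → ℝ, (B.mulVec u) i = ∑ j, B i j * u j := by
      intro u; simp [Matrix.mulVec, dotProduct]
    have h3 : (B.mulVec (xp - y)) i - (B.mulVec (xm - y)) i = ∑ j, |B i j| * w j := by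
      rw [happ, happ, ← Finset.sum_sub_distrib]
      refine Finset.sum_congr rfl fun j _ => ?_
      simp only [hxpdef, hxmdef, Pi.sub_apply, hwdef]
      rcases le_or_gt 0 (B i j) with h | h
      · rw [if_pos h, if_pos h, abs_of_nonneg h]; ring
      · rw [if_neg (not_le.2 h), if_neg (not_le.2 h), abs_of_neg h]; ring
    have hwi : w i = b i - a i := rfl
    linarith
  -- segments between points of X stay in X
  have hsegX : ∀ x₁ ∈ X, ∀ x₂ ∈ X, ∀ t ∈ Set.Icc (0:ℝ) 1, x₂ + t • (x₁ - x₂) ∈ X := by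
    intro x₁ h1 x₂ h2 t ht
    have hmem := hXconv h2 h1 (by linarith [ht.2] : (0:ℝ) ≤ 1 - t) ht.1 (by ring)
    have heq : x₂ + t • (x₁ - x₂) = (1 - t) • x₂ + t • x₁ := by module
    rw [heq]; exact hmem
  -- the integrated Jacobian matrix for a pair of points
  have hA : ∀ x₁ ∈ X, ∀ x₂ ∈ X, ∃ A : Matrix (Fin n) (Fin n) ℝ,
      f x₁ - f x₂ = A.mulVec (x₁ - x₂) ∧
      ∀ x ∈ X, y - Y.mulVec (f y) + (1 - Y * A).mulVec (x - y) ∈ X := by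
    intro x₁ hx₁ x₂ hx₂
    set γ : ℝ → (Fin n → ℝ) := fun t => x₂ + t • (x₁ - x₂) with hγdef
    set A : Matrix (Fin n) (Fin n) ℝ :=
      Matrix.of fun i j => ∫ t in (0:ℝ)..1, J (γ t) i j with hAdef
    have hγX : ∀ t ∈ Set.Icc (0:ℝ) 1, γ t ∈ X := fun t ht => hsegX x₁ hx₁ x₂ hx₂ t ht
    have hγD : ∀ t ∈ Set.Icc (0:ℝ) 1, γ t ∈ D := fun t ht => hXD (hγX t ht)
    have hγc : Continuous γ := continuous_const.add (continuous_id.smul continuous_const)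
    have hJγc : ∀ k j, ContinuousOn (fun t => J (γ t) k j) (Set.Icc (0:ℝ) 1) := by
      intro k j
      exact ((continuous_apply j).comp (continuous_apply k)).comp_continuousOn
        (hJc.comp hγc.continuousOn hγD)
    refine ⟨A, kraw_mvt D hD f J hf hJc x₁ x₂ (fun t ht => hγD t ht), ?_⟩
    intro x hx
    set u : Fin n → ℝ := x - y with hudef
    have hwt : ∀ t ∈ Set.Icc (0:ℝ) 1,
        y - Y.mulVec (f y) + (1 - Y * J (γ t)).mulVec u ∈ X := by
      intro t ht
      exact hsub ⟨J (γ t), hJM _ (hγX t ht), x, hx, rfl⟩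
    have hsummandInt : ∀ (i k j : Fin n),
        IntervalIntegrable (fun t => Y i k * (J (γ t) k j * u j)) MeasureTheory.volume 0 1 := by
      intro i k j
      exact ((continuousOn_const.mul ((hJγc k j).mul continuousOn_const)).mono
        (by rw [Set.uIcc_of_le] <;> norm_num)).intervalIntegrable
    have hφcont : ∀ i : Fin n,
        ContinuousOn (fun t => ∑ k, ∑ j, Y i k * (J (γ t) k j * u j)) (Set.Icc (0:ℝ) 1) := by
      intro i
      apply continuousOn_finset_sum
      intro k _
      apply continuousOn_finset_sum
      intro j _
      exact continuousOn_const.mul ((hJγc k j).mul continuousOn_const)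
    have hφint : ∀ i : Fin n,
        IntervalIntegrable (fun t => ∑ k, ∑ j, Y i k * (J (γ t) k j * u j))
          MeasureTheory.volume 0 1 := by
      intro i
      exact ((hφcont i).mono (by rw [Set.uIcc_of_le] <;> norm_num)).intervalIntegrable
    have hinnerInt : ∀ (i k : Fin n),
        IntervalIntegrable (fun t => ∑ j, Y i k * (J (γ t) k j * u j))
          MeasureTheory.volume 0 1 := by
      intro i k
      have hc2 : ContinuousOn (fun t => ∑ j, Y i k * (J (γ t) k j * u j)) (Set.Icc (0:ℝ) 1) := by
        apply continuousOn_finset_sum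
        intro j _
        exact continuousOn_const.mul ((hJγc k j).mul continuousOn_const)
      exact (hc2.mono (by rw [Set.uIcc_of_le] <;> norm_num)).intervalIntegrable
    have hφval : ∀ i : Fin n, ∫ t in (0:ℝ)..1, (∑ k, ∑ j, Y i k * (J (γ t) k j * u j)) =
        ∑ k, ∑ j, Y i k * (A k j * u j) := by
      intro i
      rw [intervalIntegral.integral_finset_sum (fun k _ => hinnerInt i k)]
      refine Finset.sum_congr rfl fun k _ => ?_
      rw [intervalIntegral.integral_finset_sum (fun j _ => hsummandInt i k j)]
      refine Finset.sum_congr rfl fun j _ => ?_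
      rw [intervalIntegral.integral_const_mul, intervalIntegral.integral_mul_const]
      rfl
    have hψ : ∀ i : Fin n, (fun t => (y - Y.mulVec (f y) + (1 - Y * J (γ t)).mulVec u) i)
        = fun t => ((y - Y.mulVec (f y)) i + u i) - ∑ k, ∑ j, Y i k * (J (γ t) k j * u j) := by
      intro i
      funext t
      rw [Pi.add_apply, hexp]
      ring
    have hψint : ∀ i : Fin n,
        IntervalIntegrable (fun t => (y - Y.mulVec (f y) + (1 - Y * J (γ t)).mulVec u) i)
          MeasureTheory.volume 0 1 := by
      intro i
      rw [hψ i]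
      exact intervalIntegrable_const.sub (hφint i)
    have hval : ∀ i : Fin n, (y - Y.mulVec (f y) + (1 - Y * A).mulVec u) i =
        ∫ t in (0:ℝ)..1, ((y - Y.mulVec (f y) + (1 - Y * J (γ t)).mulVec u) i) := by
      intro i
      rw [hψ i, intervalIntegral.integral_sub intervalIntegrable_const (hφint i),
        intervalIntegral.integral_const, hφval i, Pi.add_apply, hexp]
      simp
      ring
    apply hmk
    · intro i
      have hmono := intervalIntegral.integral_mono_on (by norm_num : (0:ℝ) ≤ 1)
        intervalIntegrable_const (hψint i)
        (fun t ht => hlo _ (hwt t ht) i)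
      rw [← hval i] at hmono
      simpa using hmono
    · intro i
      have hmono := intervalIntegral.integral_mono_on (by norm_num : (0:ℝ) ≤ 1)
        (hψint i) intervalIntegrable_const
        (fun t ht => hhi _ (hwt t ht) i)
      rw [← hval i] at hmono
      simpa using hmono
  -- the iteration map
  set g : (Fin n → ℝ) → (Fin n → ℝ) := fun x => x - Y.mulVec (f x) with hgdef
  have halg : ∀ (x₁ x₂ : Fin n → ℝ) (A : Matrix (Fin n) (Fin n) ℝ),
      f x₁ - f x₂ = A.mulVec (x₁ - x₂) → g x₁ - g x₂ = (1 - Y * A).mulVec (x₁ - x₂) := by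
    intro x₁ x₂ A h
    rw [Matrix.sub_mulVec, Matrix.one_mulVec, ← Matrix.mulVec_mulVec, ← h, Matrix.mulVec_sub]
    simp only [hgdef]
    abel
  have hgX : ∀ x ∈ X, g x ∈ X := by
    intro x hx
    obtain ⟨A, h1, h2⟩ := hA x hx y hy
    have h3 : g x = y - Y.mulVec (f y) + (1 - Y * A).mulVec (x - y) := by
      rw [Matrix.sub_mulVec, Matrix.one_mulVec, ← Matrix.mulVec_mulVec, ← h1, Matrix.mulVec_sub]
      simp only [hgdef]
      abel
    rw [h3]; exact h2 x hx
  have hvz : ∀ x₁ ∈ X, ∀ x₂ ∈ X, ∀ j, w j = 0 → (x₁ - x₂) j = 0 := by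
    intro x₁ h1 x₂ h2 j hj
    have hwj : w j = b j - a j := rfl
    have e1 := hlo x₁ h1 j; have e2 := hhi x₁ h1 j
    have e3 := hlo x₂ h2 j; have e4 := hhi x₂ h2 j
    simp only [Pi.sub_apply]; linarith
  have hvb : ∀ v : Fin n → ℝ, (∀ j, w j = 0 → v j = 0) → ∀ j, |v j| ≤ ν v * w j := by
    intro v hz j
    by_cases h : w j = 0
    · rw [hz j h, h]; simp
    · have h1 := hνge v j
      have h2 : |c j * v j| = c j * |v j| := by rw [abs_mul, abs_of_pos (hcpos j)]
      have h3 : |v j| = w j * (c j * |v j|) := by rw [← mul_assoc, hwc j h, one_mul]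
      calc |v j| = w j * (c j * |v j|) := h3
        _ ≤ w j * ν v := by
            apply mul_le_mul_of_nonneg_left _ (hw0 j)
            rw [← h2]; exact h1
        _ = ν v * w j := mul_comm _ _
  have hne : ∀ x₁ ∈ X, ∀ x₂ ∈ X, ν (g x₁ - g x₂) ≤ ν (x₁ - x₂) := by
    intro x₁ h1 x₂ h2
    obtain ⟨A, hA1, hA2⟩ := hA x₁ h1 x₂ h2
    set B : Matrix (Fin n) (Fin n) ℝ := 1 - Y * A with hBdef
    have hr := hrow B hA2
    have hz := hvz x₁ h1 x₂ h2
    have hBv : ∀ i, |(B.mulVec (x₁ - x₂)) i| ≤ ν (x₁ - x₂) * w i := by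
      intro i
      have happ : (B.mulVec (x₁ - x₂)) i = ∑ j, B i j * (x₁ - x₂) j := by
        simp [Matrix.mulVec, dotProduct]
      rw [happ]
      calc |∑ j, B i j * (x₁ - x₂) j| ≤ ∑ j, |B i j * (x₁ - x₂) j| :=
            Finset.abs_sum_le_sum_abs _ _
        _ = ∑ j, |B i j| * |(x₁ - x₂) j| := by simp [abs_mul]
        _ ≤ ∑ j, |B i j| * (ν (x₁ - x₂) * w j) := by
            refine Finset.sum_le_sum fun j _ => ?_
            exact mul_le_mul_of_nonneg_left (hvb (x₁ - x₂) hz j) (abs_nonneg _)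
        _ = ν (x₁ - x₂) * ∑ j, |B i j| * w j := by
            rw [Finset.mul_sum]; exact Finset.sum_congr rfl fun j _ => by ring
        _ ≤ ν (x₁ - x₂) * w i := mul_le_mul_of_nonneg_left (hr i) (hνnonneg _)
    have hgv : g x₁ - g x₂ = B.mulVec (x₁ - x₂) := halg x₁ x₂ A hA1
    rw [hgv]
    apply hνle _ _ (hνnonneg (x₁ - x₂))
    intro i
    calc |c i * (B.mulVec (x₁ - x₂)) i| = c i * |(B.mulVec (x₁ - x₂)) i| := by
          rw [abs_mul, abs_of_pos (hcpos i)]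
      _ ≤ c i * (ν (x₁ - x₂) * w i) :=
          mul_le_mul_of_nonneg_left (hBv i) (le_of_lt (hcpos i))
      _ = ν (x₁ - x₂) * (c i * w i) := by ring
      _ ≤ ν (x₁ - x₂) * 1 := mul_le_mul_of_nonneg_left (hcw i) (hνnonneg _)
      _ = ν (x₁ - x₂) := mul_one _
  have hbnd : ∀ x ∈ X, ν (y - g x) ≤ 1 := by
    intro x hx
    apply hνle _ _ zero_le_one
    intro i
    have h1 := hlo y hy i; have h2 := hhi y hy i
    have h3 := hlo _ (hgX x hx) i; have h4 := hhi _ (hgX x hx) i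
    have h5 : |(y - g x) i| ≤ w i := by
      have hwi : w i = b i - a i := rfl
      rw [Pi.sub_apply, abs_le]
      constructor <;> linarith
    calc |c i * (y - g x) i| = c i * |(y - g x) i| := by rw [abs_mul, abs_of_pos (hcpos i)]
      _ ≤ c i * w i := mul_le_mul_of_nonneg_left h5 (le_of_lt (hcpos i))
      _ ≤ 1 := hcw i
  have hfc : ContinuousOn f X := fun z hz => ((hf z (hXD hz)).continuousAt).continuousWithinAt
  have hmvc : Continuous fun u : Fin n → ℝ => Y.mulVec u := by
    apply continuous_pi
    intro i
    have heq : (fun u : Fin n → ℝ => (Y.mulVec u) i) = fun u => ∑ j, Y i j * u j := by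
      funext u; simp [Matrix.mulVec, dotProduct]
    rw [heq]
    exact continuous_finset_sum _ fun j _ => continuous_const.mul (continuous_apply j)
  have hgc : ContinuousOn g X := continuousOn_id.sub (hmvc.comp_continuousOn hfc)
  obtain ⟨xs, hxsX, hfix⟩ := kraw_fixedpoint ν hνc hν0 hνnonneg hνsmul X hXcompact hXconv
    g hgc hgX y hy hne hbnd
  refine ⟨xs, hxsX, ?_⟩
  simp only [hgdef] at hfix
  have h0 : Y.mulVec (f xs) = 0 := sub_eq_self.mp hfix
  have hinj : Function.Injective Y.mulVec := Matrix.mulVec_injective_iff_isUnit.2 hY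
  have : Y.mulVec (f xs) = Y.mulVec 0 := by rw [h0, Matrix.mulVec_zero]
  exact hinj this
end

section
/- If there exist y ∈ X and an invertible n×n real matrix Y such that K(y, X) is strictly included in X, i.e., K(y, X) is contained in the interior of X, then f has exactly one zero in X: there exists a unique x* ∈ X with f(x*) = 0. -/
open MeasureTheory Set

lemma kraw_cont_mulVec {n : ℕ} (v : Fin n → ℝ) :
    Continuous fun A : Matrix (Fin n) (Fin n) ℝ => A.mulVec v :=
  continuous_id.matrix_mulVec continuous_const

lemma kraw_segG_contOn {n : ℕ} {E : Type*} [TopologicalSpace E] {D : Set (Fin n → ℝ)}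
    {J : (Fin n → ℝ) → Matrix (Fin n) (Fin n) ℝ}
    (hJc : ContinuousOn J D) {x' x : Fin n → ℝ}
    {G : Matrix (Fin n) (Fin n) ℝ → E} (hG : Continuous G)
    (hseg : ∀ t ∈ Set.Icc (0:ℝ) 1, x' + t • (x - x') ∈ D) :
    ContinuousOn (fun t => G (J (x' + t • (x - x')))) (Set.Icc (0:ℝ) 1) := by
  have hγc : Continuous fun t : ℝ => x' + t • (x - x') :=
    continuous_const.add (continuous_id.smul continuous_const)
  exact hG.comp_continuousOn (hJc.comp hγc.continuousOn hseg)

lemma kraw_segG_integrable {n : ℕ} {E : Type*} [NormedAddCommGroup E] {D : Set (Fin n → ℝ)}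
    {J : (Fin n → ℝ) → Matrix (Fin n) (Fin n) ℝ}
    (hJc : ContinuousOn J D) {x' x : Fin n → ℝ}
    {G : Matrix (Fin n) (Fin n) ℝ → E} (hG : Continuous G)
    (hseg : ∀ t ∈ Set.Icc (0:ℝ) 1, x' + t • (x - x') ∈ D) :
    IntervalIntegrable (fun t => G (J (x' + t • (x - x')))) volume 0 1 :=
  (kraw_segG_contOn hJc hG hseg).intervalIntegrable_of_Icc zero_le_one

lemma kraw_seg_integral {n : ℕ} {D : Set (Fin n → ℝ)}
    {f : (Fin n → ℝ) → (Fin n → ℝ)} {J : (Fin n → ℝ) → Matrix (Fin n) (Fin n) ℝ}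
    (hf : ∀ z ∈ D, HasFDerivAt f (LinearMap.toContinuousLinearMap (Matrix.mulVecLin (J z))) z)
    (hJc : ContinuousOn J D) {x' x : Fin n → ℝ}
    (hseg : ∀ t ∈ Set.Icc (0:ℝ) 1, x' + t • (x - x') ∈ D) :
    f x - f x' = ∫ t in (0:ℝ)..(1:ℝ), (J (x' + t • (x - x'))).mulVec (x - x') := by
  set γ : ℝ → (Fin n → ℝ) := fun t => x' + t • (x - x') with hγ
  have hint : IntervalIntegrable (fun t => (J (γ t)).mulVec (x - x')) volume 0 1 :=
    kraw_segG_integrable (G := fun A => A.mulVec (x - x')) hJc (kraw_cont_mulVec (x - x')) hseg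
  have hderiv : ∀ t ∈ Set.uIcc (0:ℝ) 1,
      HasDerivAt (fun t => f (γ t)) ((J (γ t)).mulVec (x - x')) t := by
    intro t ht
    rw [Set.uIcc_of_le zero_le_one] at ht
    have hγd : HasDerivAt γ (x - x') t := by
      have h0 := ((hasDerivAt_id t).smul_const (x - x')).const_add x'
      simp only [one_smul] at h0
      exact h0
    have := (hf (γ t) (hseg t ht)).comp_hasDerivAt t hγd
    exact this
  have := intervalIntegral.integral_eq_sub_of_hasDerivAt hderiv hint
  rw [this]
  simp [hγ]

lemma kraw_gdiff {n : ℕ} {D : Set (Fin n → ℝ)}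
    {f : (Fin n → ℝ) → (Fin n → ℝ)} {J : (Fin n → ℝ) → Matrix (Fin n) (Fin n) ℝ}
    (hf : ∀ z ∈ D, HasFDerivAt f (LinearMap.toContinuousLinearMap (Matrix.mulVecLin (J z))) z)
    (hJc : ContinuousOn J D) (Y : Matrix (Fin n) (Fin n) ℝ) {x' x : Fin n → ℝ}
    (hseg : ∀ t ∈ Set.Icc (0:ℝ) 1, x' + t • (x - x') ∈ D) :
    (x - Y.mulVec (f x)) - (x' - Y.mulVec (f x')) =
      ∫ t in (0:ℝ)..(1:ℝ), (1 - Y * J (x' + t • (x - x'))).mulVec (x - x') := by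
  set γ : ℝ → (Fin n → ℝ) := fun t => x' + t • (x - x') with hγ
  have hint : IntervalIntegrable (fun t => (J (γ t)).mulVec (x - x')) volume 0 1 :=
    kraw_segG_integrable (G := fun A => A.mulVec (x - x')) hJc (kraw_cont_mulVec (x - x')) hseg
  have hYcont : Continuous fun v : Fin n → ℝ => Y.mulVec v :=
    continuous_const.matrix_mulVec continuous_id
  have hintY : IntervalIntegrable (fun t => Y.mulVec ((J (γ t)).mulVec (x - x'))) volume 0 1 :=
    kraw_segG_integrable (G := fun A => Y.mulVec (A.mulVec (x - x'))) hJc (hYcont.comp (kraw_cont_mulVec (x - x'))) hseg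
  have hcomm := ContinuousLinearMap.intervalIntegral_comp_comm (𝕜 := ℝ)
    (LinearMap.toContinuousLinearMap (Matrix.mulVecLin Y)) hint
  simp only [LinearMap.coe_toContinuousLinearMap', Matrix.mulVecLin_apply] at hcomm
  have h1 : (x - Y.mulVec (f x)) - (x' - Y.mulVec (f x')) =
      (x - x') - Y.mulVec (f x - f x') := by
    rw [Matrix.mulVec_sub]; abel
  rw [h1, kraw_seg_integral hf hJc hseg, ← hcomm]
  have h2 : ∀ t : ℝ, (1 - Y * J (γ t)).mulVec (x - x') =
      (x - x') - Y.mulVec ((J (γ t)).mulVec (x - x')) := by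
    intro t
    rw [Matrix.sub_mulVec, Matrix.one_mulVec, Matrix.mulVec_mulVec]
  show _ = ∫ t in (0:ℝ)..(1:ℝ), (1 - Y * J (γ t)).mulVec (x - x')
  simp only [h2]
  rw [intervalIntegral.integral_sub intervalIntegrable_const hintY]
  simp

/-- Krawczyk operator, Property 4: if `K(y, X)` is strictly included in `X` (i.e. contained in
the interior of `X`) for some `y ∈ X` and some invertible real `n × n` matrix `Y`, then `f`
has exactly one zero in the box `X`. -/
theorem krawczyk_strict_subset_uniqueness (n : ℕ) (hn : 1 ≤ n)
    (D : Set (Fin n → ℝ)) (hD : IsOpen D)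
    (f : (Fin n → ℝ) → (Fin n → ℝ))
    (J : (Fin n → ℝ) → Matrix (Fin n) (Fin n) ℝ)
    (hf : ∀ z ∈ D, HasFDerivAt f (LinearMap.toContinuousLinearMap (Matrix.mulVecLin (J z))) z)
    (hJc : ContinuousOn J D)
    (a b : Fin n → ℝ) (hab : a ≤ b)
    (X : Set (Fin n → ℝ)) (hX : X = Set.Icc a b) (hXD : X ⊆ D)
    (M : Set (Matrix (Fin n) (Fin n) ℝ)) (hM : Convex ℝ M)
    (hJM : ∀ z ∈ X, J z ∈ M)
    (y : Fin n → ℝ) (hy : y ∈ X)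
    (Y : Matrix (Fin n) (Fin n) ℝ) (hY : IsUnit Y)
    (hsub : { w | ∃ A ∈ M, ∃ x ∈ X,
      w = y - Y.mulVec (f y) + (1 - Y * A).mulVec (x - y) } ⊆ interior X) :
    ∃! xstar, xstar ∈ X ∧ f xstar = 0 := by
  classical
  subst hX
  haveI : Nonempty (Fin n) := ⟨⟨0, hn⟩⟩
  set c : Fin n → ℝ := y - Y.mulVec (f y) with hc
  -- componentwise description of the interior of the box
  have hintmem : ∀ w : Fin n → ℝ, w ∈ interior (Icc a b) ↔ ∀ i, a i < w i ∧ w i < b i := by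
    intro w
    rw [← Set.pi_univ_Icc, interior_pi_set Set.finite_univ]
    simp [Set.mem_pi, interior_Icc]
  have hKmem : ∀ A ∈ M, ∀ x ∈ Icc a b, ∀ i,
      a i < (c + (1 - Y * A).mulVec (x - y)) i ∧ (c + (1 - Y * A).mulVec (x - y)) i < b i :=
    fun A hA x hx => (hintmem _).mp (hsub ⟨A, hA, x, hx, rfl⟩)
  -- strict row-sum bound for every matrix in M
  have hrow : ∀ A ∈ M, ∀ i, ∑ j, |(1 - Y * A) i j| * (b j - a j) < b i - a i := by
    intro A hA i
    set L := (1 : Matrix (Fin n) (Fin n) ℝ) - Y * A with hL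
    set xp : Fin n → ℝ := fun j => if 0 ≤ L i j then b j else a j with hxp
    set xm : Fin n → ℝ := fun j => if 0 ≤ L i j then a j else b j with hxm
    have hxpX : xp ∈ Icc a b := by
      constructor <;> intro j <;> simp only [hxp] <;> split <;> simp [hab j, le_refl]
    have hxmX : xm ∈ Icc a b := by
      constructor <;> intro j <;> simp only [hxm] <;> split <;> simp [hab j, le_refl]
    have h1 := (hKmem A hA xp hxpX i).2
    have h2 := (hKmem A hA xm hxmX i).1
    have key : L.mulVec (xp - y) i - L.mulVec (xm - y) i = ∑ j, |L i j| * (b j - a j) := by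
      simp only [Matrix.mulVec, dotProduct, ← Finset.sum_sub_distrib]
      apply Finset.sum_congr rfl
      intro j _
      simp only [Pi.sub_apply, hxp, hxm]
      rcases le_or_gt 0 (L i j) with hLij | hLij
      · rw [if_pos hLij, if_pos hLij, abs_of_nonneg hLij]; ring
      · rw [if_neg (not_le.mpr hLij), if_neg (not_le.mpr hLij), abs_of_neg hLij]; ring
    simp only [Pi.add_apply] at h1 h2
    linarith
  have hd : ∀ i, 0 < b i - a i := by
    intro i
    refine lt_of_le_of_lt ?_ (hrow (J y) (hJM y hy) i)
    exact Finset.sum_nonneg fun j _ => mul_nonneg (abs_nonneg _) (sub_nonneg.mpr (hab j))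
  -- uniform contraction constant over the compact set J '' X
  have hKcomp : IsCompact (J '' Icc a b) := isCompact_Icc.image_of_continuousOn (hJc.mono hXD)
  have hKne : (J '' Icc a b).Nonempty := ⟨J y, Set.mem_image_of_mem J hy⟩
  have hρcont : ∀ i, Continuous fun A : Matrix (Fin n) (Fin n) ℝ =>
      ∑ j, |(1 - Y * A) i j| * (b j - a j) := by
    intro i
    apply continuous_finset_sum
    intro j _
    exact (((continuous_const.sub
      (continuous_const.matrix_mul continuous_id)).matrix_elem i j).abs).mul continuous_const
  have hθi : ∀ i, ∃ θi, θi < b i - a i ∧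
      ∀ A ∈ J '' Icc a b, ∑ j, |(1 - Y * A) i j| * (b j - a j) ≤ θi := by
    intro i
    obtain ⟨A₀, hA₀K, hmax⟩ := hKcomp.exists_isMaxOn hKne (hρcont i).continuousOn
    refine ⟨_, ?_, fun A hA => hmax hA⟩
    obtain ⟨z, hz, rfl⟩ := hA₀K
    exact hrow (J z) (hJM z hz) i
  choose θi hθilt hθile using hθi
  set θ : ℝ := max (Finset.univ.sup' Finset.univ_nonempty fun i => θi i / (b i - a i)) 0
    with hθdef
  have hθ0 : 0 ≤ θ := le_max_right _ _
  have hθ1 : θ < 1 :=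
    max_lt ((Finset.sup'_lt_iff _).mpr fun i _ => (div_lt_one (hd i)).mpr (hθilt i)) one_pos
  have hθb : ∀ i, θi i ≤ θ * (b i - a i) := by
    intro i
    have h1 : θi i / (b i - a i) ≤ θ :=
      le_trans (Finset.le_sup' (fun i => θi i / (b i - a i)) (Finset.mem_univ i)) (le_max_left _ _)
    calc θi i = (θi i / (b i - a i)) * (b i - a i) := (div_mul_cancel₀ _ (hd i).ne').symm
    _ ≤ θ * (b i - a i) := mul_le_mul_of_nonneg_right h1 (hd i).le
  have hsegD : ∀ x ∈ Icc a b, ∀ x' ∈ Icc a b, ∀ t ∈ Set.Icc (0:ℝ) 1,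
      x' + t • (x - x') ∈ D :=
    fun x hx x' hx' t ht => hXD ((convex_Icc a b).add_smul_sub_mem hx' hx ht)
  have hsegX : ∀ x ∈ Icc a b, ∀ x' ∈ Icc a b, ∀ t ∈ Set.Icc (0:ℝ) 1,
      x' + t • (x - x') ∈ Icc a b :=
    fun x hx x' hx' t ht => (convex_Icc a b).add_smul_sub_mem hx' hx ht
  -- the contraction estimate
  have hcontr : ∀ x ∈ Icc a b, ∀ x' ∈ Icc a b, ∀ s : ℝ,
      (∀ j, |x j - x' j| ≤ s * (b j - a j)) →
      ∀ i, |((x - Y.mulVec (f x)) - (x' - Y.mulVec (f x'))) i| ≤ θ * s * (b i - a i) := by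
    intro x hx x' hx' s hs i
    have hs0 : 0 ≤ s := by nlinarith [abs_nonneg (x i - x' i), hd i, hs i]
    have hGcont : Continuous fun A : Matrix (Fin n) (Fin n) ℝ =>
        (1 - Y * A).mulVec (x - x') :=
      (continuous_const.sub (continuous_const.matrix_mul continuous_id)).matrix_mulVec
        continuous_const
    have hintL : IntervalIntegrable
        (fun t => (1 - Y * J (x' + t • (x - x'))).mulVec (x - x')) volume 0 1 :=
      kraw_segG_integrable (G := fun A => (1 - Y * A).mulVec (x - x')) hJc hGcont (hsegD x hx x' hx')
    have hrep := kraw_gdiff hf hJc Y (hsegD x hx x' hx')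
    have hcomp := ContinuousLinearMap.intervalIntegral_comp_comm (𝕜 := ℝ)
      (ContinuousLinearMap.proj (R := ℝ) (φ := fun _ : Fin n => ℝ) i) hintL
    simp only [ContinuousLinearMap.proj_apply] at hcomp
    have hcompeq : ((x - Y.mulVec (f x)) - (x' - Y.mulVec (f x'))) i =
        ∫ t in (0:ℝ)..(1:ℝ), ((1 - Y * J (x' + t • (x - x'))).mulVec (x - x')) i := by
      rw [hrep] at *
      exact hcomp.symm ▸ rfl
    rw [hcompeq]
    have hbound : ∀ t ∈ Set.uIoc (0:ℝ) 1,
        ‖((1 - Y * J (x' + t • (x - x'))).mulVec (x - x')) i‖ ≤ θ * s * (b i - a i) := by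
      intro t ht
      rw [Set.uIoc_of_le zero_le_one] at ht
      have htI : t ∈ Set.Icc (0:ℝ) 1 := Set.Ioc_subset_Icc_self ht
      have hz : x' + t • (x - x') ∈ Icc a b := hsegX x hx x' hx' t htI
      set A := J (x' + t • (x - x')) with hA
      have h1 : ‖((1 - Y * A).mulVec (x - x')) i‖ ≤
          ∑ j, |(1 - Y * A) i j| * |x j - x' j| := by
        rw [Real.norm_eq_abs]
        simp only [Matrix.mulVec, dotProduct, Pi.sub_apply]
        refine le_trans (Finset.abs_sum_le_sum_abs _ _) (le_of_eq ?_)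
        exact Finset.sum_congr rfl fun j _ => abs_mul _ _
      have h2 : ∑ j, |(1 - Y * A) i j| * |x j - x' j| ≤
          s * ∑ j, |(1 - Y * A) i j| * (b j - a j) := by
        rw [Finset.mul_sum]
        refine Finset.sum_le_sum fun j _ => ?_
        calc |(1 - Y * A) i j| * |x j - x' j| ≤ |(1 - Y * A) i j| * (s * (b j - a j)) :=
          mul_le_mul_of_nonneg_left (hs j) (abs_nonneg _)
        _ = s * (|(1 - Y * A) i j| * (b j - a j)) := by ring
      have h3 : ∑ j, |(1 - Y * A) i j| * (b j - a j) ≤ θi i :=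
        hθile i A ⟨_, hz, rfl⟩
      have h4 : s * ∑ j, |(1 - Y * A) i j| * (b j - a j) ≤ s * (θ * (b i - a i)) :=
        mul_le_mul_of_nonneg_left (le_trans h3 (hθb i)) hs0
      calc ‖((1 - Y * A).mulVec (x - x')) i‖ ≤ ∑ j, |(1 - Y * A) i j| * |x j - x' j| := h1
      _ ≤ s * ∑ j, |(1 - Y * A) i j| * (b j - a j) := h2
      _ ≤ s * (θ * (b i - a i)) := h4
      _ = θ * s * (b i - a i) := by ring
    have := intervalIntegral.norm_integral_le_of_norm_le_const hbound
    simp only [sub_zero, abs_one, mul_one] at this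
    rw [← Real.norm_eq_abs]
    exact this
  -- the Newton-like map sends the box into itself
  have hgmem : ∀ x ∈ Icc a b, x - Y.mulVec (f x) ∈ Icc a b := by
    intro x hx
    have hGcont : Continuous fun A : Matrix (Fin n) (Fin n) ℝ =>
        (1 - Y * A).mulVec (x - y) :=
      (continuous_const.sub (continuous_const.matrix_mul continuous_id)).matrix_mulVec
        continuous_const
    have hintF : IntervalIntegrable
        (fun t => (1 - Y * J (y + t • (x - y))).mulVec (x - y)) volume 0 1 :=
      kraw_segG_integrable (G := fun A => (1 - Y * A).mulVec (x - y)) hJc hGcont (hsegD x hx y hy)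
    have hrep := kraw_gdiff hf hJc Y (hsegD x hx y hy)
    have hrep2 : x - Y.mulVec (f x) =
        ∫ t in (0:ℝ)..(1:ℝ), (c + (1 - Y * J (y + t • (x - y))).mulVec (x - y)) := by
      rw [intervalIntegral.integral_add intervalIntegrable_const hintF,
        intervalIntegral.integral_const]
      rw [← hrep, hc]
      simp only [sub_zero, one_smul]
      abel
    rw [hrep2, intervalIntegral.integral_of_le zero_le_one]
    haveI : IsProbabilityMeasure (volume.restrict (Ioc (0:ℝ) 1)) := ⟨by simp⟩
    apply Convex.integral_mem (convex_Icc a b) isClosed_Icc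
    · refine (ae_restrict_iff' measurableSet_Ioc).mpr (Filter.Eventually.of_forall ?_)
      intro t ht
      have htI : t ∈ Set.Icc (0:ℝ) 1 := Set.Ioc_subset_Icc_self ht
      have hz : y + t • (x - y) ∈ Icc a b := hsegX x hx y hy t htI
      exact interior_subset (hsub ⟨J (y + t • (x - y)), hJM _ hz, x, hx, rfl⟩)
    · refine (ContinuousOn.integrableOn_Icc ?_).mono_set Set.Ioc_subset_Icc_self
      exact continuousOn_const.add (kraw_segG_contOn (G := fun A => (1 - Y * A).mulVec (x - y)) hJc hGcont (hsegD x hx y hy))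
  -- transfer to the unit box to get a genuine metric contraction
  set T : (Fin n → ℝ) → (Fin n → ℝ) := fun u i => a i + (b i - a i) * u i with hT
  set Ti : (Fin n → ℝ) → (Fin n → ℝ) := fun x i => (x i - a i) / (b i - a i) with hTi
  have hTTi : ∀ x, T (Ti x) = x := by
    intro x; funext i
    simp only [hT, hTi]
    have hne : b i - a i ≠ 0 := (hd i).ne'
    field_simp
    ring
  have hTmem : ∀ u, u ∈ Icc (0 : Fin n → ℝ) 1 → T u ∈ Icc a b := by
    intro u hu
    constructor <;> intro i
    · have h1 : (0:ℝ) ≤ u i := by simpa using hu.1 i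
      simp only [hT]; nlinarith [hd i]
    · have h2 : u i ≤ (1:ℝ) := by simpa using hu.2 i
      simp only [hT]; nlinarith [hd i]
  have hTimem : ∀ x, x ∈ Icc a b → Ti x ∈ Icc (0 : Fin n → ℝ) 1 := by
    intro x hx
    constructor <;> intro i
    · simp only [hTi, Pi.zero_apply]
      exact div_nonneg (by linarith [hx.1 i]) (hd i).le
    · simp only [hTi, Pi.one_apply]
      rw [div_le_one (hd i)]
      linarith [hx.2 i]
  set g : (Fin n → ℝ) → (Fin n → ℝ) := fun x => x - Y.mulVec (f x) with hg
  set h : (Fin n → ℝ) → (Fin n → ℝ) := fun u => Ti (g (T u)) with hgh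
  have hhmem : ∀ u ∈ Icc (0 : Fin n → ℝ) 1, h u ∈ Icc (0 : Fin n → ℝ) 1 := by
    intro u hu
    exact hTimem _ (hgmem _ (hTmem u hu))
  have hlip : ∀ u ∈ Icc (0 : Fin n → ℝ) 1, ∀ u' ∈ Icc (0 : Fin n → ℝ) 1,
      dist (h u) (h u') ≤ θ * dist u u' := by
    intro u hu u' hu'
    rw [dist_pi_le_iff (mul_nonneg hθ0 dist_nonneg)]
    intro i
    have hdist : ∀ j, |T u j - T u' j| ≤ dist u u' * (b j - a j) := by
      intro j
      have h0 : |u j - u' j| ≤ dist u u' := by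
        rw [← Real.dist_eq]; exact dist_le_pi_dist u u' j
      have h1 : T u j - T u' j = (b j - a j) * (u j - u' j) := by simp only [hT]; ring
      rw [h1, abs_mul, abs_of_nonneg (hd j).le]
      calc (b j - a j) * |u j - u' j| ≤ (b j - a j) * dist u u' :=
        mul_le_mul_of_nonneg_left h0 (hd j).le
      _ = dist u u' * (b j - a j) := by ring
    have hkey := hcontr (T u) (hTmem u hu) (T u') (hTmem u' hu') (dist u u') hdist i
    rw [Real.dist_eq]
    have h2 : h u i - h u' i = ((g (T u) - g (T u')) i) / (b i - a i) := by
      simp only [hgh, hTi, hg, Pi.sub_apply]; ring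
    rw [h2, abs_div, abs_of_pos (hd i), div_le_iff₀ (hd i)]
    calc |(g (T u) - g (T u')) i| ≤ θ * dist u u' * (b i - a i) := hkey
    _ = θ * dist u u' * (b i - a i) := rfl
  haveI hBc : CompleteSpace ↥(Icc (0 : Fin n → ℝ) 1) :=
    IsClosed.completeSpace_coe (hs := isClosed_Icc)
  haveI hBn : Nonempty ↥(Icc (0 : Fin n → ℝ) 1) :=
    ⟨⟨0, Set.mem_Icc.mpr ⟨le_refl 0, fun i => zero_le_one⟩⟩⟩
  set F : ↥(Icc (0 : Fin n → ℝ) 1) → ↥(Icc (0 : Fin n → ℝ) 1) :=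
    fun u => ⟨h u.1, hhmem u.1 u.2⟩ with hF
  have hcw : ContractingWith θ.toNNReal F := by
    constructor
    · have hcoe : (θ.toNNReal : ℝ) < 1 := by rw [Real.coe_toNNReal _ hθ0]; exact hθ1
      exact_mod_cast hcoe
    · apply LipschitzWith.of_dist_le_mul
      intro u u'
      rw [Subtype.dist_eq, Subtype.dist_eq, Real.coe_toNNReal _ hθ0]
      exact hlip u.1 u.2 u'.1 u'.2
  set u0 : Fin n → ℝ := (ContractingWith.fixedPoint F hcw).1 with hu0
  have hu0B : u0 ∈ Icc (0 : Fin n → ℝ) 1 := (ContractingWith.fixedPoint F hcw).2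
  have hfix : h u0 = u0 := congrArg Subtype.val (hcw.fixedPoint_isFixedPt)
  have hxsX : T u0 ∈ Icc a b := hTmem u0 hu0B
  have hgfix : g (T u0) = T u0 := by
    calc g (T u0) = T (Ti (g (T u0))) := (hTTi _).symm
    _ = T (h u0) := rfl
    _ = T u0 := by rw [hfix]
  have hfzero : ∀ x, g x = x → f x = 0 := by
    intro x hgx
    have hYf : Y.mulVec (f x) = 0 := by
      have h0 : x - Y.mulVec (f x) = x := hgx
      have := sub_eq_self.mp h0
      exact this
    have hdet : IsUnit Y.det := (Matrix.isUnit_iff_isUnit_det Y).mp hY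
    calc f x = (Y⁻¹ * Y).mulVec (f x) := by
          rw [Matrix.nonsing_inv_mul Y hdet, Matrix.one_mulVec]
    _ = Y⁻¹.mulVec (Y.mulVec (f x)) := (Matrix.mulVec_mulVec _ _ _).symm
    _ = 0 := by rw [hYf, Matrix.mulVec_zero]
  refine ⟨T u0, ⟨hxsX, hfzero (T u0) hgfix⟩, ?_⟩
  intro x1 hx1
  have hg1 : g x1 = x1 := by
    simp only [hg, hx1.2, Matrix.mulVec_zero, sub_zero]
  have hfix1 : h (Ti x1) = Ti x1 := by
    simp only [hgh]; rw [hTTi, hg1]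
  have hfix2 : h (Ti (T u0)) = Ti (T u0) := by
    simp only [hgh]; rw [hTTi, hgfix]
  have hds := hlip (Ti x1) (hTimem x1 hx1.1) (Ti (T u0)) (hTimem (T u0) hxsX)
  rw [hfix1, hfix2] at hds
  have hdz : dist (Ti x1) (Ti (T u0)) = 0 := by
    nlinarith [dist_nonneg (x := Ti x1) (y := Ti (T u0))]
  have heq : Ti x1 = Ti (T u0) := dist_eq_zero.mp hdz
  calc x1 = T (Ti x1) := (hTTi x1).symm
  _ = T (Ti (T u0)) := by rw [heq]
  _ = T u0 := hTTi (T u0)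
end

section
/- (Kantorovich theorem, existence part.) Under the stated hypotheses, F has a zero x* in the closed ball of center x₀ and radius t* = ((1 − √(1 − 2h))/h)·η, and the Newton sequence defined by x_{k+1} = x_k − F'(x_k)⁻¹ F(x_k) starting from x₀ is well defined (each F'(x_k) is invertible) and converges to x*. -/
open Set Metric Filter

noncomputable def newtonSeqR (L η : ℝ) : ℕ → ℝ
  | 0 => 0
  | k+1 => newtonSeqR L η k +
      (L/2 * (newtonSeqR L η k)^2 - newtonSeqR L η k + η) / (1 - L * newtonSeqR L η k)

lemma newton_scalar_step (L η : ℝ) (hL : 0 < L) (hη : 0 < η) (hh : L * η ≤ 1/2)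
    (s ts : ℝ) (hs : s = Real.sqrt (1 - 2*(L*η))) (hts : ts = (1-s)/L)
    (t : ℝ) (ht0 : 0 ≤ t) (ht : t < ts) :
    0 < 1 - L*t ∧ 0 ≤ L/2*t^2 - t + η ∧
    t ≤ t + (L/2*t^2 - t + η)/(1 - L*t) ∧
    (t + (L/2*t^2 - t + η)/(1 - L*t)) < ts ∧
    ts - (t + (L/2*t^2 - t + η)/(1 - L*t)) ≤ (ts - t)/2 ∧
    (L/2*(t + (L/2*t^2 - t + η)/(1 - L*t))^2 - (t + (L/2*t^2 - t + η)/(1 - L*t)) + η)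
      = L/2*((L/2*t^2 - t + η)/(1 - L*t))^2 := by
  have h2 : (0:ℝ) ≤ 1 - 2*(L*η) := by linarith
  have hs0 : 0 ≤ s := hs ▸ Real.sqrt_nonneg _
  have hs1 : s ≤ 1 := by
    rw [hs]
    calc Real.sqrt (1 - 2*(L*η)) ≤ Real.sqrt 1 := by
          apply Real.sqrt_le_sqrt; nlinarith
      _ = 1 := Real.sqrt_one
  have hssq : s^2 = 1 - 2*(L*η) := by rw [hs, Real.sq_sqrt h2]
  have hLts : L * ts = 1 - s := by rw [hts]; field_simp
  set d := ts - t with hd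
  have hdpos : 0 < d := by simp only [hd]; linarith
  have hden : 1 - L*t = s + L*d := by
    have h' : L * t = L * ts - L * d := by rw [hd]; ring
    rw [h', hLts]; ring
  have hdenpos : 0 < 1 - L*t := by rw [hden]; positivity
  have hphi : L/2*t^2 - t + η = d*(L/2*d + s) := by
    have h2L : (2*L) ≠ 0 := by positivity
    apply mul_left_cancel₀ h2L
    have ht' : t = ts - d := by rw [hd]; ring
    rw [ht']
    linear_combination (2*L*(ts - d) - L*ts - (1+s)) * hLts + hssq
  have hphi_nonneg : 0 ≤ L/2*t^2 - t + η := by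
    rw [hphi]; positivity
  have hsd : (0:ℝ) < s + L*d := by positivity
  have key : ts - (t + (L/2*t^2 - t + η)/(1 - L*t)) = d * (L*d/2)/(s + L*d) := by
    rw [hphi, hden]
    have ht' : t = ts - d := by rw [hd]; ring
    field_simp
    ring
  refine ⟨hdenpos, hphi_nonneg, ?_, ?_, ?_, ?_⟩
  · have : 0 ≤ (L/2*t^2 - t + η)/(1 - L*t) := div_nonneg hphi_nonneg hdenpos.le
    linarith
  · have hpos : 0 < d * (L*d/2)/(s + L*d) := by positivity
    linarith [key ▸ hpos]
  · rw [key, div_le_iff₀ hsd]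
    nlinarith
  · set q : ℝ := (L/2*t^2 - t + η)/(1 - L*t) with hq
    have hqden : q * (1 - L*t) = L/2*t^2 - t + η := by
      rw [hq]; field_simp
    have expand : L/2*(t+q)^2 - (t+q) + η
        = (L/2*t^2 - t + η) + (L*t - 1)*q + L/2*q^2 := by ring
    rw [expand, ← hqden]; ring

lemma newtonSeqR_props (L η : ℝ) (hL : 0 < L) (hη : 0 < η) (hh : L * η ≤ 1/2)
    (s ts : ℝ) (hs : s = Real.sqrt (1 - 2*(L*η))) (hts : ts = (1-s)/L) :
    ∀ k : ℕ, 0 ≤ newtonSeqR L η k ∧ newtonSeqR L η k < ts ∧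
      newtonSeqR L η k ≤ newtonSeqR L η (k+1) ∧
      ts - newtonSeqR L η (k+1) ≤ (ts - newtonSeqR L η k)/2 := by
  have h2 : (0:ℝ) ≤ 1 - 2*(L*η) := by linarith
  have hs0 : 0 ≤ s := hs ▸ Real.sqrt_nonneg _
  have hssq : s^2 = 1 - 2*(L*η) := by rw [hs, Real.sq_sqrt h2]
  have hs1 : s < 1 := by nlinarith
  have hts0 : 0 < ts := by rw [hts]; apply div_pos <;> linarith
  have main : ∀ k : ℕ, 0 ≤ newtonSeqR L η k ∧ newtonSeqR L η k < ts := by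
    intro k
    induction k with
    | zero => exact ⟨le_refl _, by simpa [newtonSeqR] using hts0⟩
    | succ n ih =>
      obtain ⟨h0, h1⟩ := ih
      obtain ⟨_, _, hmono, hlt, _, _⟩ := newton_scalar_step L η hL hη hh s ts hs hts _ h0 h1
      exact ⟨le_trans h0 (by simpa [newtonSeqR] using hmono), by simpa [newtonSeqR] using hlt⟩
  intro k
  obtain ⟨h0, h1⟩ := main k
  obtain ⟨_, _, hmono, hlt, hhalf', _⟩ := newton_scalar_step L η hL hη hh s ts hs hts _ h0 h1
  exact ⟨h0, h1, by simpa [newtonSeqR] using hmono, by simpa [newtonSeqR] using hhalf'⟩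

lemma newtonSeqR_phi (L η : ℝ) (hL : 0 < L) (hη : 0 < η) (hh : L * η ≤ 1/2)
    (s ts : ℝ) (hs : s = Real.sqrt (1 - 2*(L*η))) (hts : ts = (1-s)/L) (k : ℕ) :
    0 < 1 - L * newtonSeqR L η k ∧ 0 ≤ L/2*(newtonSeqR L η k)^2 - newtonSeqR L η k + η ∧
    (L/2*(newtonSeqR L η (k+1))^2 - newtonSeqR L η (k+1) + η)
      = L/2*(newtonSeqR L η (k+1) - newtonSeqR L η k)^2 := by
  obtain ⟨h0, h1, _, _⟩ := newtonSeqR_props L η hL hη hh s ts hs hts k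
  obtain ⟨hden, hnn, _, _, _, hid⟩ := newton_scalar_step L η hL hη hh s ts hs hts _ h0 h1
  refine ⟨hden, hnn, ?_⟩
  have hrec : newtonSeqR L η (k+1) = newtonSeqR L η k +
      (L/2 * (newtonSeqR L η k)^2 - newtonSeqR L η k + η) / (1 - L * newtonSeqR L η k) := rfl
  rw [hrec]
  simpa using hid



lemma taylor_quadratic_bound {X E : Type*} [NormedAddCommGroup X] [NormedSpace ℝ X]
    [NormedAddCommGroup E] [NormedSpace ℝ E]
    {s : Set X} (hs : Convex ℝ s) {G : X → E} {G' : X → X →L[ℝ] E} {L : ℝ}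
    (hG : ∀ x ∈ s, HasFDerivAt G (G' x) x)
    (hLip : ∀ x ∈ s, ∀ y ∈ s, ‖G' x - G' y‖ ≤ L * ‖x - y‖)
    {x y : X} (hx : x ∈ s) (hy : y ∈ s) :
    ‖G y - G x - G' x (y - x)‖ ≤ L / 2 * ‖y - x‖ ^ 2 := by
  set v := y - x with hv
  have hmem : ∀ t : ℝ, t ∈ Icc (0:ℝ) 1 → x + t • v ∈ s := by
    intro t ht
    have := hs hx hy (by linarith [ht.2] : (0:ℝ) ≤ 1 - t) ht.1 (by ring)
    convert this using 1
    rw [hv]; module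
  set f : ℝ → E := fun t => G (x + t • v) - G x - t • (G' x v) with hf
  set f' : ℝ → E := fun t => G' (x + t • v) v - G' x v with hf'
  have hderiv : ∀ t ∈ Icc (0:ℝ) 1, HasDerivAt f (f' t) t := by
    intro t ht
    have hinner : HasDerivAt (fun u : ℝ => x + u • v) v t := by
      simpa using ((hasDerivAt_id t).smul_const v).const_add x
    have houter : HasDerivAt (fun u : ℝ => G (x + u • v)) (G' (x + t • v) v) t :=
      (hG _ (hmem t ht)).comp_hasDerivAt t hinner
    have hlin : HasDerivAt (fun u : ℝ => u • (G' x v)) (G' x v) t := by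
      simpa using (hasDerivAt_id t).smul_const (G' x v)
    exact (houter.sub_const (G x)).sub hlin
  have hbound : ∀ t ∈ Ico (0:ℝ) 1, ‖f' t‖ ≤ (L * ‖v‖^2) * t := by
    intro t ht
    have htI : t ∈ Icc (0:ℝ) 1 := ⟨ht.1, ht.2.le⟩
    have h1 : f' t = (G' (x + t • v) - G' x) v := by
      simp [hf', ContinuousLinearMap.sub_apply]
    rw [h1]
    calc ‖(G' (x + t • v) - G' x) v‖ ≤ ‖G' (x + t • v) - G' x‖ * ‖v‖ :=
          ContinuousLinearMap.le_opNorm _ _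
      _ ≤ (L * ‖x + t • v - x‖) * ‖v‖ := by
          apply mul_le_mul_of_nonneg_right _ (norm_nonneg _)
          exact hLip _ (hmem t htI) _ hx
      _ = (L * ‖v‖^2) * t := by
          rw [show x + t • v - x = t • v by abel, norm_smul, Real.norm_eq_abs,
            abs_of_nonneg ht.1]
          ring
  have hB : ∀ t : ℝ, HasDerivAt (fun u : ℝ => L * ‖v‖^2 / 2 * u^2) ((L * ‖v‖^2) * t) t := by
    intro t
    have := (hasDerivAt_pow 2 t).const_mul (L * ‖v‖^2 / 2)
    simpa using this.congr_deriv (by ring)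
  have hcont : ContinuousOn f (Icc 0 1) := fun t ht => (hderiv t ht).continuousAt.continuousWithinAt
  have key := image_norm_le_of_norm_deriv_right_le_deriv_boundary hcont
    (fun t ht => (hderiv t (Ico_subset_Icc_self ht)).hasDerivWithinAt)
    (by simp [hf]) hB hbound (right_mem_Icc.2 zero_le_one)
  have hf1 : f 1 = G y - G x - G' x v := by simp [hf, hv]
  have : L * ‖y - x‖ ^ 2 / 2 = L / 2 * ‖y - x‖ ^ 2 := by ring
  simpa [hf1, hv, this] using key


noncomputable def newtonSeqX {X : Type*} [NormedAddCommGroup X] [NormedSpace ℝ X]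
    (G : X → X) (G' : X → X →L[ℝ] X) (x₀ : X) : ℕ → X
  | 0 => x₀
  | k+1 => newtonSeqX G G' x₀ k -
      Ring.inverse (G' (newtonSeqX G G' x₀ k)) (G (newtonSeqX G G' x₀ k))

set_option maxHeartbeats 2000000 in
/-- Kantorovich theorem, existence part: under the Kantorovich hypotheses, `F` has a zero `x*`
in the closed ball of center `x₀` and radius `t* = ((1 - √(1 - 2h))/h)·η`, and the Newton
sequence `x_{k+1} = x_k - F'(x_k)⁻¹ F(x_k)` starting from `x₀` is well defined (each `F'(x_k)`
is invertible) and converges to `x*`. -/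
theorem kantorovich_existence
    (X Y : Type*) [NormedAddCommGroup X] [NormedSpace ℝ X] [CompleteSpace X]
    [NormedAddCommGroup Y] [NormedSpace ℝ Y] [CompleteSpace Y]
    (D₀ : Set X) (hD₀ : IsOpen D₀) (hconv : Convex ℝ D₀)
    (F : X → Y) (F' : X → X →L[ℝ] Y)
    (hF : ∀ x ∈ D₀, HasFDerivAt F (F' x) x)
    (x₀ : X) (hx₀ : x₀ ∈ D₀)
    (A : X ≃L[ℝ] Y) (hA : (A : X →L[ℝ] Y) = F' x₀)
    (B η K : ℝ) (hB : 0 < B) (hη : 0 < η) (hK : 0 < K)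
    (hBbound : ‖(A.symm : Y →L[ℝ] X)‖ ≤ B)
    (hηbound : ‖A.symm (F x₀)‖ ≤ η)
    (hLip : ∀ x ∈ D₀, ∀ y ∈ D₀, ‖F' x - F' y‖ ≤ K * ‖x - y‖)
    (h : ℝ) (hdef : h = B * K * η) (hhalf : h ≤ 1 / 2)
    (tstar : ℝ) (htstar : tstar = (1 - Real.sqrt (1 - 2 * h)) / h * η)
    (hball : Metric.closedBall x₀ tstar ⊆ D₀) :
    ∃ xstar ∈ Metric.closedBall x₀ tstar, F xstar = 0 ∧
      ∃ xs : ℕ → X, xs 0 = x₀ ∧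
        (∀ k : ℕ, ∃ e : X ≃L[ℝ] Y, (e : X →L[ℝ] Y) = F' (xs k) ∧
          xs (k + 1) = xs k - e.symm (F (xs k))) ∧
        Filter.Tendsto xs Filter.atTop (nhds xstar) := by
  classical
  set L : ℝ := B * K with hLdef
  have hLpos : 0 < L := mul_pos hB hK
  have hLη : L * η = h := by rw [hdef, hLdef]
  set sq : ℝ := Real.sqrt (1 - 2*(L*η)) with hsq
  have hts : tstar = (1 - sq)/L := by
    rw [htstar, hsq, hLη]
    rw [hdef]
    field_simp
  have hh' : L * η ≤ 1/2 := by rw [hLη]; exact hhalf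
  -- scalar sequence
  set t : ℕ → ℝ := newtonSeqR L η with htdef
  have tprops := newtonSeqR_props L η hLpos hη hh' sq tstar hsq hts
  have tphi := newtonSeqR_phi L η hLpos hη hh' sq tstar hsq hts
  set φ : ℝ → ℝ := fun u => L/2*u^2 - u + η with hφdef
  have hts_pos : 0 < tstar := lt_of_le_of_lt (tprops 0).1 (tprops 0).2.1
  -- normalized map
  set G : X → X := fun x => A.symm (F x) with hGdef
  set G' : X → X →L[ℝ] X := fun x => (A.symm : Y →L[ℝ] X).comp (F' x) with hG'def
  have hGderiv : ∀ x ∈ closedBall x₀ tstar, HasFDerivAt G (G' x) x := fun x hx =>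
    ((A.symm : Y →L[ℝ] X).hasFDerivAt).comp x (hF x (hball hx))
  have hGlip : ∀ x ∈ closedBall x₀ tstar, ∀ y ∈ closedBall x₀ tstar,
      ‖G' x - G' y‖ ≤ L * ‖x - y‖ := by
    intro x hx y hy
    have heq : G' x - G' y = (A.symm : Y →L[ℝ] X).comp (F' x - F' y) := by
      ext w; simp [hG'def]
    rw [heq]
    calc ‖(A.symm : Y →L[ℝ] X).comp (F' x - F' y)‖
        ≤ ‖(A.symm : Y →L[ℝ] X)‖ * ‖F' x - F' y‖ := ContinuousLinearMap.opNorm_comp_le _ _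
      _ ≤ B * (K * ‖x - y‖) := by
          apply mul_le_mul hBbound (hLip x (hball hx) y (hball hy)) (norm_nonneg _) hB.le
      _ = L * ‖x - y‖ := by rw [hLdef]; ring
  have hG'x₀ : G' x₀ = 1 := by
    ext w
    simp [hG'def, ← hA]
  have hGx₀ : ‖G x₀‖ ≤ η := hηbound
  -- the Newton sequence
  set xs : ℕ → X := newtonSeqX G G' x₀ with hxsdef
  have hxs0 : xs 0 = x₀ := by rw [hxsdef]; rfl
  have hxsrec : ∀ k, xs (k+1) = xs k - Ring.inverse (G' (xs k)) (G (xs k)) := by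
    intro k; rw [hxsdef]; rfl
  have htrec : ∀ k, t (k+1) = t k + φ (t k) / (1 - L * t k) := by
    intro k; rw [htdef, hφdef]; rfl
  -- main induction
  have mem_ball : ∀ k, ‖xs k - x₀‖ ≤ t k → xs k ∈ closedBall x₀ tstar := by
    intro k hk
    rw [mem_closedBall, dist_eq_norm]
    exact hk.trans (tprops k).2.1.le
  -- invertibility data, given the norm bound
  have inv_data : ∀ k, ‖xs k - x₀‖ ≤ t k →
      ‖(1 : X →L[ℝ] X) - G' (xs k)‖ ≤ L * t k ∧ IsUnit (G' (xs k)) ∧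
      (G' (xs k)) * Ring.inverse (G' (xs k)) = 1 ∧
      Ring.inverse (G' (xs k)) * (G' (xs k)) = 1 := by
    intro k hk
    have h1 : ‖(1 : X →L[ℝ] X) - G' (xs k)‖ ≤ L * t k := by
      rw [← hG'x₀]
      calc ‖G' x₀ - G' (xs k)‖ ≤ L * ‖x₀ - xs k‖ :=
            hGlip x₀ (mem_closedBall_self hts_pos.le) _ (mem_ball k hk)
        _ = L * ‖xs k - x₀‖ := by rw [norm_sub_rev]
        _ ≤ L * t k := by
            exact mul_le_mul_of_nonneg_left hk hLpos.le
    have hlt1 : ‖(1 : X →L[ℝ] X) - G' (xs k)‖ < 1 := by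
      have := (tphi k).1
      nlinarith
    have hu : IsUnit (G' (xs k)) := by
      have h' : G' (xs k) = ↑(Units.oneSub ((1 : X →L[ℝ] X) - G' (xs k)) hlt1) := by
        rw [Units.val_oneSub, sub_sub_cancel]
      exact ⟨(Units.oneSub _ hlt1).copy (G' (xs k)) h' _ rfl, rfl⟩
    exact ⟨h1, hu, Ring.mul_inverse_cancel _ hu, Ring.inverse_mul_cancel _ hu⟩
  -- step bound
  have step_bound : ∀ k, ‖xs k - x₀‖ ≤ t k → ‖G (xs k)‖ ≤ φ (t k) →
      ‖xs (k+1) - xs k‖ ≤ t (k+1) - t k := by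
    intro k hk hGk
    obtain ⟨h1, hu, hmi, him⟩ := inv_data k hk
    set v : X := Ring.inverse (G' (xs k)) (G (xs k)) with hv
    have hGv : (G' (xs k)) v = G (xs k) := by
      have := DFunLike.congr_fun hmi (G (xs k))
      simpa [ContinuousLinearMap.mul_apply] using this
    have hveq : v = G (xs k) + ((1 : X →L[ℝ] X) - G' (xs k)) v := by
      simp [ContinuousLinearMap.sub_apply, hGv]
    have hvbound : ‖v‖ ≤ ‖G (xs k)‖ + (L * t k) * ‖v‖ := by
      calc ‖v‖ = ‖G (xs k) + ((1 : X →L[ℝ] X) - G' (xs k)) v‖ := by rw [← hveq]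
        _ ≤ ‖G (xs k)‖ + ‖((1 : X →L[ℝ] X) - G' (xs k)) v‖ := norm_add_le _ _
        _ ≤ ‖G (xs k)‖ + ‖(1 : X →L[ℝ] X) - G' (xs k)‖ * ‖v‖ := by
            have := ContinuousLinearMap.le_opNorm ((1 : X →L[ℝ] X) - G' (xs k)) v
            linarith
        _ ≤ ‖G (xs k)‖ + (L * t k) * ‖v‖ := by nlinarith [norm_nonneg v]
    have hden : 0 < 1 - L * t k := (tphi k).1
    have hvb2 : ‖v‖ ≤ φ (t k) / (1 - L * t k) := by
      rw [le_div_iff₀ hden]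
      nlinarith [norm_nonneg v]
    have : xs (k+1) - xs k = -v := by rw [hxsrec k, hv]; abel
    rw [this, norm_neg, htrec k]
    simpa using hvb2
  have main : ∀ k, ‖xs k - x₀‖ ≤ t k ∧ ‖G (xs k)‖ ≤ φ (t k) := by
    intro k
    induction k with
    | zero =>
      refine ⟨by simp [hxs0, newtonSeqR, htdef], ?_⟩
      have : φ (t 0) = η := by simp [hφdef, htdef, newtonSeqR]
      rw [this]; exact hGx₀
    | succ n ih =>
      obtain ⟨h1, h2⟩ := ih
      have hstep := step_bound n h1 h2
      have hmono := (tprops n).2.2.1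
      have hb1 : ‖xs (n+1) - x₀‖ ≤ t (n+1) := by
        calc ‖xs (n+1) - x₀‖ ≤ ‖xs (n+1) - xs n‖ + ‖xs n - x₀‖ := norm_sub_le_norm_sub_add_norm_sub _ _ _
          _ ≤ (t (n+1) - t n) + t n := add_le_add hstep h1
          _ = t (n+1) := by ring
      refine ⟨hb1, ?_⟩
      obtain ⟨hd1, hu, hmi, him⟩ := inv_data n h1
      have hGv : (G' (xs n)) (Ring.inverse (G' (xs n)) (G (xs n))) = G (xs n) := by
        have := DFunLike.congr_fun hmi (G (xs n))
        simpa [ContinuousLinearMap.mul_apply] using this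
      have hkey : G' (xs n) (xs (n+1) - xs n) = - G (xs n) := by
        rw [hxsrec n, show xs n - Ring.inverse (G' (xs n)) (G (xs n)) - xs n
            = -(Ring.inverse (G' (xs n)) (G (xs n))) by abel, map_neg, hGv]
      have hGid : G (xs (n+1))
          = G (xs (n+1)) - G (xs n) - G' (xs n) (xs (n+1) - xs n) := by
        rw [hkey]; abel
      have htay := taylor_quadratic_bound (convex_closedBall x₀ tstar) hGderiv hGlip
        (mem_ball n h1) (mem_ball (n+1) hb1)
      have hbnd : ‖G (xs (n+1))‖ ≤ L/2 * ‖xs (n+1) - xs n‖^2 := by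
        rw [hGid]; exact htay
      have hphi_id := (tphi n).2.2
      calc ‖G (xs (n+1))‖ ≤ L/2 * ‖xs (n+1) - xs n‖^2 := hbnd
        _ ≤ L/2 * (t (n+1) - t n)^2 := by
            have hp : ‖xs (n+1) - xs n‖^2 ≤ (t (n+1) - t n)^2 :=
              pow_le_pow_left₀ (norm_nonneg _) hstep 2
            have : (0:ℝ) ≤ L/2 := by positivity
            exact mul_le_mul_of_nonneg_left hp this
        _ = φ (t (n+1)) := hphi_id.symm
  -- geometric convergence of t
  have geom : ∀ k, tstar - t k ≤ tstar / 2^k := by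
    intro k
    induction k with
    | zero => simp [htdef, newtonSeqR]
    | succ n ih =>
      have := (tprops n).2.2.2
      calc tstar - t (n+1) ≤ (tstar - t n)/2 := this
        _ ≤ (tstar / 2^n)/2 := by linarith
        _ = tstar / 2^(n+1) := by ring
  -- Cauchy
  have hcauchy : CauchySeq xs := by
    apply cauchySeq_of_le_geometric (1/2 : ℝ) tstar (by norm_num)
    intro n
    rw [dist_eq_norm, ← norm_neg]
    have h1 := step_bound n (main n).1 (main n).2
    have h2 : t (n+1) - t n ≤ tstar - t n := by
      have := (tprops (n+1)).2.1
      linarith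
    have h3 : tstar - t n ≤ tstar / 2^n := geom n
    calc ‖-(xs n - xs (n+1))‖ = ‖xs (n+1) - xs n‖ := by rw [neg_sub]
      _ ≤ tstar * (1/2)^n := by
          rw [show tstar * (1/2:ℝ)^n = tstar / 2^n by rw [div_pow, one_pow]; ring]
          linarith
  obtain ⟨xstar, hxstar⟩ := cauchySeq_tendsto_of_complete hcauchy
  have hmemb : ∀ k, xs k ∈ closedBall x₀ tstar := fun k => mem_ball k (main k).1
  have hxstar_mem : xstar ∈ closedBall x₀ tstar :=
    isClosed_closedBall.mem_of_tendsto hxstar (Eventually.of_forall hmemb)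
  -- G xstar = 0
  have hGlim : Tendsto (fun k => G (xs k)) atTop (nhds (G xstar)) :=
    ((hGderiv xstar hxstar_mem).continuousAt.tendsto).comp hxstar
  have hszero : Tendsto (fun k => G (xs k)) atTop (nhds 0) := by
    apply squeeze_zero_norm (a := fun k => tstar * (1/2)^k)
    · intro k
      have h2 : (0:ℝ) ≤ 1 - 2*(L*η) := by rw [hLη]; linarith
      have hs0 : 0 ≤ sq := hsq ▸ Real.sqrt_nonneg _
      have hssq : sq^2 = 1 - 2*(L*η) := by rw [hsq, Real.sq_sqrt h2]
      have hs1 : sq ≤ 1 := by nlinarith [mul_pos hLpos hη]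
      have h0k := (tprops k).1
      have h1k := (tprops k).2.1
      have hLts : L * tstar = 1 - sq := by rw [hts]; field_simp
      have hfact2 : 2*L*(φ (t k)) = L*((tstar - t k)*((1+sq) - L*(t k))) := by
        simp only [hφdef]
        linear_combination (L*(t k) - 1 - sq) * hLts + hssq
      have hfact : 2*(φ (t k)) = (tstar - t k)*((1+sq) - L*(t k)) := by
        apply mul_left_cancel₀ hLpos.ne'
        linarith [hfact2]
      have hLtk : 0 ≤ L * t k := mul_nonneg hLpos.le h0k
      have hb1 : φ (t k) ≤ tstar - t k := by nlinarith
      calc ‖G (xs k)‖ ≤ φ (t k) := (main k).2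
        _ ≤ tstar - t k := hb1
        _ ≤ tstar / 2^k := geom k
        _ = tstar * (1/2)^k := by rw [div_pow, one_pow]; ring
    · have hpow : Tendsto (fun k : ℕ => (1/2 : ℝ)^k) atTop (nhds 0) :=
        tendsto_pow_atTop_nhds_zero_of_lt_one (by norm_num) (by norm_num)
      simpa using hpow.const_mul tstar
  have hGzero : G xstar = 0 := tendsto_nhds_unique hGlim hszero
  have hFzero : F xstar = 0 := by
    have : A.symm (F xstar) = 0 := hGzero
    rwa [ContinuousLinearEquiv.map_eq_zero_iff] at this
  -- Newton structure
  refine ⟨xstar, hxstar_mem, hFzero, xs, hxs0, ?_, hxstar⟩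
  intro k
  obtain ⟨h1, hu, hmi, him⟩ := inv_data k (main k).1
  set e₀ : X ≃L[ℝ] X := ContinuousLinearEquiv.equivOfInverse (G' (xs k))
    (Ring.inverse (G' (xs k)))
    (fun w => by
      have := DFunLike.congr_fun him ((G' (xs k)) w)
      simpa [ContinuousLinearMap.mul_apply] using
        DFunLike.congr_fun him w
    )
    (fun w => by
      simpa [ContinuousLinearMap.mul_apply] using
        DFunLike.congr_fun hmi w) with he₀
  refine ⟨e₀.trans A, ?_, ?_⟩
  · ext w
    have h2 : e₀ w = G' (xs k) w := rfl
    simp only [ContinuousLinearEquiv.coe_coe, ContinuousLinearEquiv.trans_apply, h2]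
    show A ((A.symm : Y →L[ℝ] X).comp (F' (xs k)) w) = F' (xs k) w
    simp
  · have hsymm : (e₀.trans A).symm (F (xs k)) = e₀.symm (A.symm (F (xs k))) := rfl
    rw [hsymm]
    have h3 : e₀.symm (A.symm (F (xs k))) = Ring.inverse (G' (xs k)) (G (xs k)) := rfl
    rw [h3, hxsrec k]
end

section
/- (Kantorovich theorem, convergence rate.) Assume additionally h < 1/2 and set θ = (1 − √(1 − 2h))/(1 + √(1 − 2h)) ∈ (0, 1). Let x* be the zero of F in the closed ball of center x₀ and radius t* = ((1 − √(1 − 2h))/h)·η to which the Newton sequence x_{k+1} = x_k − F'(x_k)⁻¹ F(x_k) converges. Then for every k ≥ 0, ‖x* − x_{k+1}‖ ≤ (θ^{2^{k+1}} (1 − θ²)) / (θ (1 − θ^{2^{k+1}})) · η. -/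
set_option maxHeartbeats 1000000

open Set

lemma kant_taylor {X Y : Type*} [NormedAddCommGroup X] [NormedSpace ℝ X]
    [NormedAddCommGroup Y] [NormedSpace ℝ Y]
    {s : Set X} (hs : Convex ℝ s) {f : X → Y} {f' : X → X →L[ℝ] Y}
    (hf : ∀ z ∈ s, HasFDerivAt f (f' z) z) {L : ℝ}
    (hLip : ∀ u ∈ s, ∀ v ∈ s, ‖f' u - f' v‖ ≤ L * ‖u - v‖)
    {x y : X} (hx : x ∈ s) (hy : y ∈ s) :
    ‖f y - f x - f' x (y - x)‖ ≤ L / 2 * ‖y - x‖ ^ 2 := by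
  set d := y - x with hd
  have hmem : ∀ t : ℝ, t ∈ Icc (0:ℝ) 1 → x + t • d ∈ s := fun t ht =>
    hs.add_smul_sub_mem hx hy ht
  set g : ℝ → Y := fun t => f (x + t • d) - f x - t • (f' x d) with hg
  have hderiv : ∀ t ∈ Icc (0:ℝ) 1,
      HasDerivAt g (f' (x + t • d) d - f' x d) t := by
    intro t ht
    have h1 : HasDerivAt (fun t : ℝ => x + t • d) d t := by
      simpa using ((hasDerivAt_id t).smul_const d).const_add x
    have h2 : HasDerivAt (fun t : ℝ => f (x + t • d)) (f' (x + t • d) d) t :=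
      (hf _ (hmem t ht)).comp_hasDerivAt t h1
    have h3 : HasDerivAt (fun t : ℝ => t • (f' x d)) (f' x d) t := by
      simpa using (hasDerivAt_id t).smul_const (f' x d)
    exact (h2.sub_const (f x)).sub h3
  have hBder : ∀ t : ℝ, HasDerivAt (fun t : ℝ => L * ‖d‖ ^ 2 * t ^ 2 / 2)
      (L * ‖d‖ ^ 2 * t) t := by
    intro t
    have := ((hasDerivAt_pow 2 t).const_mul (L * ‖d‖ ^ 2)).div_const 2
    convert this using 1
    all_goals first | rfl | (push_cast; ring)
  have key : ∀ ⦃u : ℝ⦄, u ∈ Icc (0:ℝ) 1 → ‖g u‖ ≤ L * ‖d‖ ^ 2 * u ^ 2 / 2 := by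
    apply image_norm_le_of_norm_deriv_right_le_deriv_boundary
      (f' := fun t => f' (x + t • d) d - f' x d)
    · intro t ht
      exact (hderiv t ht).continuousAt.continuousWithinAt
    · intro t ht
      exact (hderiv t (Ico_subset_Icc_self ht)).hasDerivWithinAt
    · simp [hg]
    · exact hBder
    · intro t ht
      have ht0 := ht.1
      have hb := hLip _ (hmem t (Ico_subset_Icc_self ht)) _ (hmem 0 (by norm_num))
      have hnorm : ‖(f' (x + t • d) - f' x) d‖ ≤ ‖f' (x + t • d) - f' x‖ * ‖d‖ :=
        (f' (x + t • d) - f' x).le_opNorm d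
      simp only [ContinuousLinearMap.sub_apply] at hnorm
      have : ‖x + t • d - (x + (0:ℝ) • d)‖ = t * ‖d‖ := by
        simp [norm_smul, abs_of_nonneg ht0]
      rw [zero_smul, add_zero] at hb this
      calc ‖f' (x + t • d) d - f' x d‖ ≤ ‖f' (x + t • d) - f' x‖ * ‖d‖ := hnorm
        _ ≤ L * ‖x + t • d - x‖ * ‖d‖ := by
            apply mul_le_mul_of_nonneg_right hb (norm_nonneg d)
        _ = L * ‖d‖ ^ 2 * t := by rw [this]; ring
  have h1 := key (u := 1) (by norm_num)
  simp only [hg, one_smul] at h1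
  have hxy : x + d = y := by rw [hd]; abel
  rw [hxy] at h1
  calc ‖f y - f x - f' x (y - x)‖ = ‖f y - f x - (1:ℝ) • f' x d‖ := by rw [hd]; simp
    _ ≤ L * ‖d‖ ^ 2 * 1 ^ 2 / 2 := by simpa using h1
    _ = L / 2 * ‖y - x‖ ^ 2 := by rw [hd]; ring

lemma kant_inv_bound {X : Type*} [NormedAddCommGroup X] [NormedSpace ℝ X]
    (E : X ≃L[ℝ] X) {c : ℝ} (hc : c < 1)
    (hE : ‖ContinuousLinearMap.id ℝ X - (E : X →L[ℝ] X)‖ ≤ c) :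
    ‖(E.symm : X →L[ℝ] X)‖ ≤ 1 / (1 - c) := by
  set S := (E.symm : X →L[ℝ] X) with hS
  have hid : S = ContinuousLinearMap.id ℝ X
      + S.comp (ContinuousLinearMap.id ℝ X - (E : X →L[ℝ] X)) := by
    ext v
    simp [hS, ContinuousLinearMap.comp_apply, map_sub]
  have hb : ‖S‖ ≤ 1 + ‖S‖ * c := by
    calc ‖S‖ = ‖ContinuousLinearMap.id ℝ X
        + S.comp (ContinuousLinearMap.id ℝ X - (E : X →L[ℝ] X))‖ := by rw [← hid]
      _ ≤ ‖ContinuousLinearMap.id ℝ X‖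
          + ‖S.comp (ContinuousLinearMap.id ℝ X - (E : X →L[ℝ] X))‖ := norm_add_le _ _
      _ ≤ 1 + ‖S‖ * c := by
          have h1 := ContinuousLinearMap.opNorm_comp_le S
            (ContinuousLinearMap.id ℝ X - (E : X →L[ℝ] X))
          have h2 : ‖S‖ * ‖ContinuousLinearMap.id ℝ X - (E : X →L[ℝ] X)‖ ≤ ‖S‖ * c :=
            mul_le_mul_of_nonneg_left hE (norm_nonneg S)
          have h3 : ‖ContinuousLinearMap.id ℝ X‖ ≤ 1 := ContinuousLinearMap.norm_id_le
          linarith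
  rw [le_div_iff₀ (by linarith)]
  nlinarith [norm_nonneg S]


lemma kant_alg (θ η q : ℝ) (hθ : θ ≠ 0) (hq : 1 - q ≠ 0) :
    (1 - θ ^ 2) / θ * η * q / (1 - q) = q * (1 - θ ^ 2) / (θ * (1 - q)) * η := by
  field_simp

/-- Kantorovich theorem, convergence rate: assuming additionally `h < 1/2`, with
`θ = (1 - √(1 - 2h))/(1 + √(1 - 2h))`, if `x*` is the zero of `F` in the closed ball of center
`x₀` and radius `t* = ((1 - √(1 - 2h))/h)·η` to which the Newton sequence
`x_{k+1} = x_k - F'(x_k)⁻¹ F(x_k)` converges, then for every `k ≥ 0`,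
`‖x* - x_{k+1}‖ ≤ (θ^{2^{k+1}} (1 - θ²)) / (θ (1 - θ^{2^{k+1}})) · η`. -/
theorem kantorovich_convergence_rate
    (X Y : Type*) [NormedAddCommGroup X] [NormedSpace ℝ X] [CompleteSpace X]
    [NormedAddCommGroup Y] [NormedSpace ℝ Y] [CompleteSpace Y]
    (D₀ : Set X) (hD₀ : IsOpen D₀) (hconv : Convex ℝ D₀)
    (F : X → Y) (F' : X → X →L[ℝ] Y)
    (hF : ∀ x ∈ D₀, HasFDerivAt F (F' x) x)
    (x₀ : X) (hx₀ : x₀ ∈ D₀)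
    (A : X ≃L[ℝ] Y) (hA : (A : X →L[ℝ] Y) = F' x₀)
    (B η K : ℝ) (hB : 0 < B) (hη : 0 < η) (hK : 0 < K)
    (hBbound : ‖(A.symm : Y →L[ℝ] X)‖ ≤ B)
    (hηbound : ‖A.symm (F x₀)‖ ≤ η)
    (hLip : ∀ x ∈ D₀, ∀ y ∈ D₀, ‖F' x - F' y‖ ≤ K * ‖x - y‖)
    (h : ℝ) (hdef : h = B * K * η) (hhalf : h < 1 / 2)
    (tstar : ℝ) (htstar : tstar = (1 - Real.sqrt (1 - 2 * h)) / h * η)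
    (hball : Metric.closedBall x₀ tstar ⊆ D₀)
    (θ : ℝ) (hθ : θ = (1 - Real.sqrt (1 - 2 * h)) / (1 + Real.sqrt (1 - 2 * h)))
    (xs : ℕ → X) (hxs0 : xs 0 = x₀)
    (hNewton : ∀ k : ℕ, ∃ e : X ≃L[ℝ] Y, (e : X →L[ℝ] Y) = F' (xs k) ∧
      xs (k + 1) = xs k - e.symm (F (xs k)))
    (xstar : X) (hxstar : xstar ∈ Metric.closedBall x₀ tstar) (hzero : F xstar = 0)
    (hlim : Filter.Tendsto xs Filter.atTop (nhds xstar)) :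
    ∀ k : ℕ, ‖xstar - xs (k + 1)‖ ≤
      θ ^ (2 ^ (k + 1)) * (1 - θ ^ 2) / (θ * (1 - θ ^ (2 ^ (k + 1)))) * η := by
  intro k
  set s := Real.sqrt (1 - 2 * h) with hs
  set a := B * K with haK
  have ha : 0 < a := mul_pos hB hK
  have hhpos : 0 < h := by rw [hdef]; positivity
  have h2 : 0 < 1 - 2 * h := by linarith
  have hs2 : s ^ 2 = 1 - 2 * h := Real.sq_sqrt h2.le
  have hspos : 0 < s := Real.sqrt_pos.mpr h2
  have hs1 : s < 1 := by nlinarith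
  have hη' : η = (1 - s ^ 2) / (2 * a) := by
    rw [hs2, hdef]
    field_simp
    ring
  have hts : tstar = (1 - s) / a := by
    rw [htstar, hdef]
    field_simp
  have hθ0 : 0 < θ := by rw [hθ]; exact div_pos (by linarith) (by linarith)
  have hθ1 : θ < 1 := by
    rw [hθ, div_lt_one (by linarith)]; linarith
  -- powers of θ
  have hq0 : ∀ n : ℕ, 0 < θ ^ (2 ^ n) := fun n => pow_pos hθ0 _
  have hq1 : ∀ n : ℕ, θ ^ (2 ^ n) < 1 := fun n =>
    pow_lt_one₀ hθ0.le hθ1 (by positivity)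
  have hqne : ∀ n : ℕ, (1:ℝ) - θ ^ (2 ^ n) ≠ 0 := by
    intro n
    have := hq1 n
    have h0 : (0:ℝ) < 1 - θ ^ (2 ^ n) := by linarith
    exact h0.ne'
  have hq2 : ∀ n : ℕ, θ ^ (2 ^ (n + 1)) = (θ ^ (2 ^ n)) ^ 2 := by
    intro n
    rw [pow_succ, pow_mul]
  -- scalar Newton sequence, closed form
  set t : ℕ → ℝ := fun n => tstar - 2 * s / a * θ ^ (2 ^ n) / (1 - θ ^ (2 ^ n)) with htdef
  set pk : ℕ → ℝ := fun n => a / 2 * (tstar - t n) * ((1 + s) / a - t n) with hpkdef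
  have S1 : t 0 = 0 := by
    simp only [htdef, pow_zero, pow_one, hts, hθ]
    have h1 : (1:ℝ) + s ≠ 0 := by positivity
    have h2 : (1:ℝ) - (1 - s) / (1 + s) ≠ 0 := by
      have : (1:ℝ) - (1 - s) / (1 + s) = 2 * s / (1 + s) := by field_simp; ring
      rw [this]; positivity
    have h3 : s ≠ 0 := hspos.ne'
    field_simp
    ring_nf; field_simp; ring
  have S2 : ∀ n, t n < tstar := by
    intro n
    have hd : 0 < 2 * s / a * θ ^ (2 ^ n) / (1 - θ ^ (2 ^ n)) := by
      have := hq0 n; have := hq1 n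
      have : (0:ℝ) < 1 - θ ^ (2 ^ n) := by linarith
      positivity
    simp only [htdef]
    linarith
  have S3 : ∀ n, s < 1 - a * t n := by
    intro n
    have h1 : a * t n < a * tstar := by
      have := S2 n; nlinarith
    have h2 : a * tstar = 1 - s := by rw [hts]; field_simp
    linarith
  have S4 : ∀ n, pk n = (t (n + 1) - t n) * (1 - a * t n) := by
    intro n
    have hc1 := hq1 n
    have hc0 := hq0 n
    have hne1 := hqne n
    have hne2 : (1:ℝ) - (θ ^ (2 ^ n)) ^ 2 ≠ 0 := by nlinarith
    simp only [hpkdef, htdef, hq2 n, hts]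
    field_simp
    ring
  have S5 : ∀ n, pk (n + 1) = a / 2 * (t (n + 1) - t n) ^ 2 := by
    intro n
    have hc1 := hq1 n
    have hc0 := hq0 n
    have hne1 := hqne n
    have hne2 : (1:ℝ) - (θ ^ (2 ^ n)) ^ 2 ≠ 0 := by nlinarith
    simp only [hpkdef, htdef, hq2 n, hts]
    field_simp
    ring
  have S7 : pk 0 = η := by
    simp only [hpkdef, S1, hts, hη']
    field_simp
    ring
  -- normalized map G = A⁻¹ ∘ F
  set G : X → X := fun z => A.symm (F z) with hGdef
  set G' : X → X →L[ℝ] X := fun z => (A.symm : Y →L[ℝ] X).comp (F' z) with hG'def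
  have hG : ∀ z ∈ D₀, HasFDerivAt G (G' z) z := by
    intro z hz
    exact ((A.symm : Y →L[ℝ] X).hasFDerivAt).comp z (hF z hz)
  have hGLip : ∀ u ∈ D₀, ∀ v ∈ D₀, ‖G' u - G' v‖ ≤ a * ‖u - v‖ := by
    intro u hu v hv
    have hcomp : G' u - G' v = (A.symm : Y →L[ℝ] X).comp (F' u - F' v) := by
      ext w; simp [hG'def]
    rw [hcomp]
    calc ‖(A.symm : Y →L[ℝ] X).comp (F' u - F' v)‖
        ≤ ‖(A.symm : Y →L[ℝ] X)‖ * ‖F' u - F' v‖ := ContinuousLinearMap.opNorm_comp_le _ _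
      _ ≤ B * (K * ‖u - v‖) := by
          apply mul_le_mul hBbound (hLip u hu v hv) (norm_nonneg _) hB.le
      _ = a * ‖u - v‖ := by rw [haK]; ring
  have hG'x₀ : G' x₀ = ContinuousLinearMap.id ℝ X := by
    rw [hG'def]
    simp only [← hA]
    ext v
    simp
  -- the inductive step
  have step : ∀ j : ℕ, ‖xs j - x₀‖ ≤ t j → ‖G (xs j)‖ ≤ pk j →
      (‖xs (j + 1) - xs j‖ ≤ t (j + 1) - t j ∧
        ‖xs (j + 1) - x₀‖ ≤ t (j + 1) ∧ ‖G (xs (j + 1))‖ ≤ pk (j + 1)) := by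
    intro j h1 h2
    have hmemj : xs j ∈ D₀ := by
      apply hball
      rw [Metric.mem_closedBall, dist_eq_norm]
      exact h1.trans (S2 j).le
    obtain ⟨e, he, hnewt⟩ := hNewton j
    set E : X ≃L[ℝ] X := e.trans A.symm with hE
    have hEcoe : (E : X →L[ℝ] X) = G' (xs j) := by
      ext v
      simp only [hE, ContinuousLinearEquiv.trans_apply, hG'def,
        ContinuousLinearMap.comp_apply]
      rw [← he]
      rfl
    have hatj : a * t j < 1 := by have := S3 j; linarith
    have hIdE : ‖ContinuousLinearMap.id ℝ X - (E : X →L[ℝ] X)‖ ≤ a * t j := by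
      rw [hEcoe, ← hG'x₀]
      calc ‖G' x₀ - G' (xs j)‖ ≤ a * ‖x₀ - xs j‖ := hGLip x₀ hx₀ (xs j) hmemj
        _ = a * ‖xs j - x₀‖ := by rw [norm_sub_rev]
        _ ≤ a * t j := by nlinarith [norm_nonneg (xs j - x₀)]
    have hEinv : ‖(E.symm : X →L[ℝ] X)‖ ≤ 1 / (1 - a * t j) :=
      kant_inv_bound E hatj hIdE
    have hstepG : xs (j + 1) = xs j - E.symm (G (xs j)) := by
      rw [hnewt]
      congr 1
      simp [hE, hGdef]
    have hdiff : xs (j + 1) - xs j = -(E.symm (G (xs j))) := by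
      rw [hstepG]; abel
    have hpos1 : (0:ℝ) < 1 - a * t j := by linarith
    have hΔ : ‖xs (j + 1) - xs j‖ ≤ t (j + 1) - t j := by
      rw [hdiff, norm_neg]
      calc ‖E.symm (G (xs j))‖ ≤ ‖(E.symm : X →L[ℝ] X)‖ * ‖G (xs j)‖ :=
            (E.symm : X →L[ℝ] X).le_opNorm _
        _ ≤ 1 / (1 - a * t j) * pk j := by
            apply mul_le_mul hEinv h2 (norm_nonneg _) (by positivity)
        _ = t (j + 1) - t j := by
            rw [S4 j]
            field_simp
    refine ⟨hΔ, ?_, ?_⟩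
    · calc ‖xs (j + 1) - x₀‖ ≤ ‖xs (j + 1) - xs j‖ + ‖xs j - x₀‖ := norm_sub_le_norm_sub_add_norm_sub _ _ _
        _ ≤ (t (j + 1) - t j) + t j := add_le_add hΔ h1
        _ = t (j + 1) := by ring
    · have hmemj1 : xs (j + 1) ∈ D₀ := by
        apply hball
        rw [Metric.mem_closedBall, dist_eq_norm]
        calc ‖xs (j + 1) - x₀‖ ≤ ‖xs (j + 1) - xs j‖ + ‖xs j - x₀‖ :=
              norm_sub_le_norm_sub_add_norm_sub _ _ _
          _ ≤ (t (j + 1) - t j) + t j := add_le_add hΔ h1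
          _ ≤ tstar := by have := S2 (j + 1); linarith
      have hkill : G (xs j) + (G' (xs j)) (xs (j + 1) - xs j) = 0 := by
        rw [hdiff, ← hEcoe]
        simp
      have htay : ‖G (xs (j + 1)) - G (xs j) - (G' (xs j)) (xs (j + 1) - xs j)‖ ≤
          a / 2 * ‖xs (j + 1) - xs j‖ ^ 2 :=
        kant_taylor hconv hG hGLip hmemj hmemj1
      have heq : G (xs (j + 1)) =
          G (xs (j + 1)) - G (xs j) - (G' (xs j)) (xs (j + 1) - xs j) := by
        have : G (xs j) + (G' (xs j)) (xs (j + 1) - xs j) = 0 := hkill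
        rw [sub_sub]
        rw [this, sub_zero]
      calc ‖G (xs (j + 1))‖
          = ‖G (xs (j + 1)) - G (xs j) - (G' (xs j)) (xs (j + 1) - xs j)‖ := by rw [← heq]
        _ ≤ a / 2 * ‖xs (j + 1) - xs j‖ ^ 2 := htay
        _ ≤ a / 2 * (t (j + 1) - t j) ^ 2 := by
            have h0 := norm_nonneg (xs (j + 1) - xs j)
            have h1 : ‖xs (j + 1) - xs j‖ ^ 2 ≤ (t (j + 1) - t j) ^ 2 :=
              pow_le_pow_left₀ h0 hΔ 2
            have h2 : (0:ℝ) ≤ a / 2 := by positivity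
            exact mul_le_mul_of_nonneg_left h1 h2
        _ = pk (j + 1) := (S5 j).symm
  -- full induction
  have main : ∀ j : ℕ, ‖xs j - x₀‖ ≤ t j ∧ ‖G (xs j)‖ ≤ pk j := by
    intro j
    induction j with
    | zero =>
      constructor
      · rw [hxs0, S1]; simp
      · rw [hxs0, S7]; exact hηbound
    | succ n ih =>
      obtain ⟨_, h2', h3'⟩ := step n ih.1 ih.2
      exact ⟨h2', h3'⟩
  have stepnorm : ∀ j : ℕ, ‖xs (j + 1) - xs j‖ ≤ t (j + 1) - t j := fun j =>
    (step j (main j).1 (main j).2).1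
  -- telescoping
  have htel : ∀ m j : ℕ, ‖xs (j + m) - xs j‖ ≤ t (j + m) - t j := by
    intro m
    induction m with
    | zero => intro j; simp
    | succ n ih =>
      intro j
      have h1 : j + (n + 1) = (j + n) + 1 := by ring
      rw [h1]
      calc ‖xs ((j + n) + 1) - xs j‖
          ≤ ‖xs ((j + n) + 1) - xs (j + n)‖ + ‖xs (j + n) - xs j‖ :=
            norm_sub_le_norm_sub_add_norm_sub _ _ _
        _ ≤ (t ((j + n) + 1) - t (j + n)) + (t (j + n) - t j) :=
            add_le_add (stepnorm (j + n)) (ih j)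
        _ = t ((j + n) + 1) - t j := by ring
  have hbound : ∀ m : ℕ, ‖xs (m + (k + 1)) - xs (k + 1)‖ ≤ tstar - t (k + 1) := by
    intro m
    have := htel m (k + 1)
    have h2' := S2 ((k + 1) + m)
    rw [Nat.add_comm m (k + 1)]
    linarith
  -- pass to the limit
  have hT : Filter.Tendsto (fun m : ℕ => xs (m + (k + 1))) Filter.atTop (nhds xstar) :=
    hlim.comp (Filter.tendsto_add_atTop_nat (k + 1))
  have hlimit : ‖xstar - xs (k + 1)‖ ≤ tstar - t (k + 1) := by
    have hnorm : Filter.Tendsto (fun m : ℕ => ‖xs (m + (k + 1)) - xs (k + 1)‖)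
        Filter.atTop (nhds ‖xstar - xs (k + 1)‖) :=
      ((hT.sub_const (xs (k + 1))).norm)
    exact le_of_tendsto hnorm (Filter.Eventually.of_forall hbound)
  -- final scalar identity
  have hcore : 2 * s / a = (1 - θ ^ 2) / θ * η := by
    have h1 : (1:ℝ) + s ≠ 0 := by positivity
    have h2' : (1:ℝ) - s ≠ 0 := by
      have h3 : (0:ℝ) < 1 - s := by linarith
      exact h3.ne'
    rw [hθ, hη']
    field_simp
    ring
  have hfinal : tstar - t (k + 1) =
      θ ^ (2 ^ (k + 1)) * (1 - θ ^ 2) / (θ * (1 - θ ^ (2 ^ (k + 1)))) * η := by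
    have hne := hqne (k + 1)
    have hθne : θ ≠ 0 := ne_of_gt hθ0
    simp only [htdef]
    rw [sub_sub_cancel, hcore]
    exact kant_alg θ η (θ ^ 2 ^ (k + 1)) hθne hne
  rw [← hfinal]
  exact hlimit
end
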